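/- arXiv:2310.15627 — 6 statements merged into one kernel-verified Lean document; each statement's English description precedes it below -/
import Mathlib

section
/- Let d ≥ 1, v̂ ∈ ℝ^d, and γ > 0 with Σ_{i=1}^d |v̂_i| > γ. Then there exists a unique κ > 0 such that Σ_{i=1}^d max(|v̂_i| − κ, 0) = γ, and the vector v* ∈ ℝ^d defined entrywise by v*_i = sgn(v̂_i)·max(|v̂_i| − κ, 0) is the unique minimizer of (1/2)‖v̂ − v‖₂² over the ℓ1 ball {v ∈ ℝ^d : ‖v‖₁ ≤ γ}. -/
/-- soft-thresholding characterization of the projection onto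
the ℓ1 ball (basis of Algorithm 2 / Duchi et al. 2008). -/
theorem stmt8 {d : ℕ} (hd : 1 ≤ d) (vhat : Fin d → ℝ) (γ : ℝ) (hγ : 0 < γ)
    (hbig : γ < ∑ i, |vhat i|) :
    (∃! κ : ℝ, 0 < κ ∧ (∑ i, max (|vhat i| - κ) 0) = γ) ∧
    (∀ κ : ℝ, 0 < κ → (∑ i, max (|vhat i| - κ) 0) = γ →
      ∀ vstar : Fin d → ℝ,
        (∀ i, vstar i = Real.sign (vhat i) * max (|vhat i| - κ) 0) →
        (∑ i, |vstar i|) ≤ γ ∧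
        ∀ v : Fin d → ℝ, (∑ i, |v i|) ≤ γ → v ≠ vstar →
          (1 / 2) * (∑ i, (vhat i - vstar i) ^ 2) <
            (1 / 2) * (∑ i, (vhat i - v i) ^ 2)) := by
  set f : ℝ → ℝ := fun κ => ∑ i, max (|vhat i| - κ) 0 with hf
  -- strict decrease where value positive
  have hstrict : ∀ a b : ℝ, a < b → f a = γ → f b < γ := by
    intro a b hab hfa
    have hex : ∃ i : Fin d, 0 < max (|vhat i| - a) 0 := by
      by_contra h
      push_neg at h
      have : f a ≤ 0 := Finset.sum_nonpos (fun i _ => h i)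
      rw [hfa] at this; linarith
    obtain ⟨i, hi⟩ := hex
    have hia : a < |vhat i| := by
      by_contra h
      push_neg at h
      rw [max_eq_right (by linarith)] at hi; linarith
    have : f b < f a := by
      apply Finset.sum_lt_sum
      · intro j _
        apply max_le_max _ le_rfl
        linarith
      · refine ⟨i, Finset.mem_univ i, ?_⟩
        rw [max_eq_left (by linarith : (0:ℝ) ≤ |vhat i| - a)]
        exact max_lt (by linarith) (by linarith)
    linarith [hfa ▸ this]
  constructor
  · -- existence and uniqueness of κ
    have hcont : Continuous f := by
      apply continuous_finset_sum
      intro i _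
      exact (continuous_const.sub continuous_id).max continuous_const
    have hS : f 0 = ∑ i, |vhat i| := by
      simp only [hf]
      exact Finset.sum_congr rfl (fun i _ => by rw [sub_zero]; exact max_eq_left (abs_nonneg _))
    set S := ∑ i, |vhat i| with hSdef
    have hfS : f S = 0 := by
      apply Finset.sum_eq_zero
      intro i _
      apply max_eq_right
      have : |vhat i| ≤ S := Finset.single_le_sum (f := fun j => |vhat j|) (fun j _ => abs_nonneg _) (Finset.mem_univ i)
      linarith
    have h0S : (0:ℝ) ≤ S := le_trans hγ.le hbig.le
    have hmem : γ ∈ Set.Icc (f S) (f 0) := by rw [hfS, hS]; exact ⟨hγ.le, hbig.le⟩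
    obtain ⟨κ, hκmem, hκeq⟩ := intermediate_value_Icc' h0S hcont.continuousOn hmem
    have hκpos : 0 < κ := by
      rcases lt_or_eq_of_le hκmem.1 with h | h
      · exact h
      · exfalso; rw [← h] at hκeq; rw [hS] at hκeq; linarith
    refine ⟨κ, ⟨hκpos, hκeq⟩, ?_⟩
    rintro κ' ⟨hκ'pos, hκ'eq⟩
    have hκ'eq' : f κ' = γ := hκ'eq
    rcases lt_trichotomy κ' κ with h | h | h
    · have := hstrict κ' κ h hκ'eq'; rw [hκeq] at this; linarith
    · exact h
    · have := hstrict κ κ' h hκeq; rw [hκ'eq'] at this; linarith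
  · intro κ hκ hsum vstar hvs
    have habs : ∀ i, |vstar i| = max (|vhat i| - κ) 0 := by
      intro i
      rw [hvs i, abs_mul]
      rcases le_or_gt (|vhat i|) κ with h | h
      · rw [max_eq_right (by linarith : |vhat i| - κ ≤ 0)]; simp
      · have hne : vhat i ≠ 0 := by
          intro h0
          rw [h0, abs_zero] at h; linarith
        have hsgn : |Real.sign (vhat i)| = 1 := by
          rcases lt_trichotomy (vhat i) 0 with hlt | heq | hgt
          · rw [Real.sign_of_neg hlt]; norm_num
          · exact absurd heq hne
          · rw [Real.sign_of_pos hgt]; norm_num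
        rw [hsgn, one_mul, abs_of_nonneg (le_max_right _ _)]
    have hl1 : ∑ i, |vstar i| = γ := by
      rw [← hsum]; exact Finset.sum_congr rfl (fun i _ => habs i)
    refine ⟨hl1.le, ?_⟩
    intro v hv hne
    -- key per-index facts
    have hub : ∀ i, |vhat i - vstar i| ≤ κ := by
      intro i
      rcases le_or_gt (|vhat i|) κ with h | h
      · have h0 : vstar i = 0 := by
          rw [hvs i, max_eq_right (by linarith : |vhat i| - κ ≤ 0), mul_zero]
        rw [h0, sub_zero]; linarith
      · have hne0 : vhat i ≠ 0 := by
          intro h0; rw [h0, abs_zero] at h; linarith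
        have hs : Real.sign (vhat i) = 1 ∨ Real.sign (vhat i) = -1 := by
          rcases lt_trichotomy (vhat i) 0 with hlt | heq | hgt
          · right; exact Real.sign_of_neg hlt
          · exact absurd heq hne0
          · left; exact Real.sign_of_pos hgt
        have hid : Real.sign (vhat i) * |vhat i| = vhat i := by
          rcases lt_trichotomy (vhat i) 0 with hlt | heq | hgt
          · rw [Real.sign_of_neg hlt, abs_of_neg hlt]; ring
          · exact absurd heq hne0
          · rw [Real.sign_of_pos hgt, abs_of_pos hgt]; ring
        have hvsi : vstar i = Real.sign (vhat i) * (|vhat i| - κ) := by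
          rw [hvs i, max_eq_left (by linarith : (0:ℝ) ≤ |vhat i| - κ)]
        have : vhat i - vstar i = Real.sign (vhat i) * κ := by
          rw [hvsi]; linear_combination -hid
        rw [this, abs_mul]
        rcases hs with h1 | h1 <;> rw [h1] <;> simp [abs_of_pos hκ]
    have hcross_eq : ∀ i, (vhat i - vstar i) * vstar i = κ * |vstar i| := by
      intro i
      rcases le_or_gt (|vhat i|) κ with h | h
      · have h0 : vstar i = 0 := by
          rw [hvs i, max_eq_right (by linarith : |vhat i| - κ ≤ 0), mul_zero]
        rw [h0]; simp
      · have hne0 : vhat i ≠ 0 := by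
          intro h0; rw [h0, abs_zero] at h; linarith
        have hs : Real.sign (vhat i) = 1 ∨ Real.sign (vhat i) = -1 := by
          rcases lt_trichotomy (vhat i) 0 with hlt | heq | hgt
          · right; exact Real.sign_of_neg hlt
          · exact absurd heq hne0
          · left; exact Real.sign_of_pos hgt
        have hid : Real.sign (vhat i) * |vhat i| = vhat i := by
          rcases lt_trichotomy (vhat i) 0 with hlt | heq | hgt
          · rw [Real.sign_of_neg hlt, abs_of_neg hlt]; ring
          · exact absurd heq hne0
          · rw [Real.sign_of_pos hgt, abs_of_pos hgt]; ring
        have hvsi : vstar i = Real.sign (vhat i) * (|vhat i| - κ) := by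
          rw [hvs i, max_eq_left (by linarith : (0:ℝ) ≤ |vhat i| - κ)]
        have habsi : |vstar i| = |vhat i| - κ := by
          rw [habs i, max_eq_left (by linarith : (0:ℝ) ≤ |vhat i| - κ)]
        have hu : vhat i - vstar i = Real.sign (vhat i) * κ := by
          rw [hvsi]; linear_combination -hid
        rw [hu, habsi, hvsi]
        rcases hs with h1 | h1 <;> rw [h1] <;> ring
    -- cross term nonnegative
    have hcross : 0 ≤ ∑ i, (vhat i - vstar i) * (vstar i - v i) := by
      have heq : ∑ i, (vhat i - vstar i) * (vstar i - v i)
          = (∑ i, (vhat i - vstar i) * vstar i) - ∑ i, (vhat i - vstar i) * v i := by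
        rw [← Finset.sum_sub_distrib]
        exact Finset.sum_congr rfl (fun i _ => by ring)
      have h1 : ∑ i, (vhat i - vstar i) * vstar i = κ * γ := by
        rw [Finset.sum_congr rfl (fun i _ => hcross_eq i), ← Finset.mul_sum, hl1]
      have h2 : ∑ i, (vhat i - vstar i) * v i ≤ κ * γ := by
        calc ∑ i, (vhat i - vstar i) * v i ≤ ∑ i, κ * |v i| := by
              apply Finset.sum_le_sum
              intro i _
              calc (vhat i - vstar i) * v i ≤ |(vhat i - vstar i) * v i| := le_abs_self _
                _ = |vhat i - vstar i| * |v i| := abs_mul _ _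
                _ ≤ κ * |v i| := mul_le_mul_of_nonneg_right (hub i) (abs_nonneg _)
          _ = κ * ∑ i, |v i| := by rw [← Finset.mul_sum]
          _ ≤ κ * γ := mul_le_mul_of_nonneg_left hv hκ.le
      rw [heq, h1]; linarith
    -- quadratic term positive
    have hquad : 0 < ∑ i, (vstar i - v i) ^ 2 := by
      obtain ⟨i, hi⟩ : ∃ i, v i ≠ vstar i := by
        by_contra h; push_neg at h; exact hne (funext h)
      refine Finset.sum_pos' (fun j _ => sq_nonneg _) ⟨i, Finset.mem_univ i, ?_⟩
      have : vstar i - v i ≠ 0 := sub_ne_zero.mpr (Ne.symm hi)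
      positivity
    have hexp : ∑ i, (vhat i - v i) ^ 2
        = ∑ i, (vhat i - vstar i) ^ 2 + 2 * ∑ i, (vhat i - vstar i) * (vstar i - v i)
          + ∑ i, (vstar i - v i) ^ 2 := by
      have : ∀ i ∈ Finset.univ, (vhat i - v i) ^ 2
          = ((vhat i - vstar i) ^ 2 + 2 * ((vhat i - vstar i) * (vstar i - v i)))
            + (vstar i - v i) ^ 2 := fun i _ => by ring
      rw [Finset.sum_congr rfl this, Finset.sum_add_distrib, Finset.sum_add_distrib,
        Finset.mul_sum]
    linarith
end

section
/- Fix p ≥ 1 and s > 0, and define F : ℝ^{p×p} → ℝ by F(V) = −log det(sI − V∘V) + p·log s. Let W ∈ ℝ^{p×p} with det(sI − W∘W) > 0. Then F is differentiable at W, and its derivative is the linear map V ↦ ⟨2((sI − W∘W)^{-1})^T ∘ W, V⟩, i.e., the gradient of F at W with respect to the Frobenius inner product is ∇F(W) = 2((sI − W∘W)^{-1})^T ∘ W. -/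
open Matrix

attribute [local instance] Matrix.normedAddCommGroup Matrix.normedSpace

noncomputable def detCM (p : ℕ) : ContinuousMultilinearMap ℝ (fun _ : Fin p => (Fin p → ℝ)) ℝ where
  toMultilinearMap := (Matrix.detRowAlternating : (Fin p → ℝ) [⋀^Fin p]→ₗ[ℝ] ℝ).toMultilinearMap
  cont := by
    show Continuous fun M : Matrix (Fin p) (Fin p) ℝ => M.det
    exact Continuous.matrix_det continuous_id

lemma det_hasFDerivAt {p : ℕ} (A : Matrix (Fin p) (Fin p) ℝ) :
    HasFDerivAt (fun M : Matrix (Fin p) (Fin p) ℝ => M.det) ((detCM p).linearDeriv A) A :=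
  (detCM p).hasFDerivAt (x := A)

lemma linearDeriv_det_apply {p : ℕ} (A H : Matrix (Fin p) (Fin p) ℝ) :
    (detCM p).linearDeriv A H = ∑ i, (A.updateRow i (H i)).det := by
  erw [ContinuousMultilinearMap.linearDeriv_apply]
  rfl

lemma det_updateRow_eq_sum {p : ℕ} (A : Matrix (Fin p) (Fin p) ℝ) (i : Fin p) (b : Fin p → ℝ) :
    (A.updateRow i b).det = ∑ j, b j * adjugate A j i := by
  rw [← cramer_transpose_apply]
  have hb : b = ∑ j, b j • (Pi.single j 1 : Fin p → ℝ) := by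
    funext k
    simp [Pi.single_apply]
  conv_lhs => rw [hb, map_sum]
  simp only [_root_.map_smul, Finset.sum_apply, Pi.smul_apply, smul_eq_mul, adjugate_def,
    Matrix.of_apply]

noncomputable def gLin {p : ℕ} (W : Matrix (Fin p) (Fin p) ℝ) :
    Matrix (Fin p) (Fin p) ℝ →ₗ[ℝ] Matrix (Fin p) (Fin p) ℝ where
  toFun V := -((2 : ℝ) • Matrix.hadamard W V)
  map_add' V V' := by
    show -((2:ℝ) • Matrix.hadamard W (V + V')) = _
    rw [hadamard_add]; module
  map_smul' c V := by
    show -((2:ℝ) • Matrix.hadamard W (c • V)) = c • -((2:ℝ) • Matrix.hadamard W V)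
    rw [hadamard_smul]; module

noncomputable def gCLM {p : ℕ} (W : Matrix (Fin p) (Fin p) ℝ) :
    Matrix (Fin p) (Fin p) ℝ →L[ℝ] Matrix (Fin p) (Fin p) ℝ :=
  LinearMap.toContinuousLinearMap (gLin W)

lemma gCLM_apply {p : ℕ} (W V : Matrix (Fin p) (Fin p) ℝ) :
    gCLM W V = -((2 : ℝ) • Matrix.hadamard W V) := rfl

lemma g_hasFDerivAt {p : ℕ} (s : ℝ) (W : Matrix (Fin p) (Fin p) ℝ) :
    HasFDerivAt (fun V : Matrix (Fin p) (Fin p) ℝ =>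
      s • (1 : Matrix (Fin p) (Fin p) ℝ) - Matrix.hadamard V V) (gCLM W) W := by
  apply hasFDerivAt_pi''
  intro i
  apply hasFDerivAt_pi''
  intro j
  have he : HasFDerivAt (fun V : Matrix (Fin p) (Fin p) ℝ => V i j)
      ((ContinuousLinearMap.proj j).comp
        (ContinuousLinearMap.proj i : Matrix (Fin p) (Fin p) ℝ →L[ℝ] (Fin p → ℝ))) W :=
    ((ContinuousLinearMap.proj j).comp
        (ContinuousLinearMap.proj i : Matrix (Fin p) (Fin p) ℝ →L[ℝ] (Fin p → ℝ))).hasFDerivAt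
  have h2 := (he.mul he).const_sub ((s • (1 : Matrix (Fin p) (Fin p) ℝ)) i j)
  refine h2.congr_fderiv ?_
  ext V
  simp only [ContinuousLinearMap.coe_comp', Function.comp_apply, ContinuousLinearMap.proj_apply,
    ContinuousLinearMap.neg_apply, ContinuousLinearMap.add_apply, ContinuousLinearMap.smul_apply,
    smul_eq_mul]
  show _ = (-((2 : ℝ) • Matrix.hadamard W V)) i j
  simp only [Matrix.neg_apply, Matrix.smul_apply, hadamard_apply, smul_eq_mul]
  show -(W i j * V i j + W i j * V i j) = _
  ring

/-- gradient of the DAGMA acyclicity function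
h_s(W) = −log det(sI − W∘W) + p log s. -/
theorem stmt9 {p : ℕ} (hp : 1 ≤ p) (s : ℝ) (hs : 0 < s)
    (F : Matrix (Fin p) (Fin p) ℝ → ℝ)
    (hF : ∀ V : Matrix (Fin p) (Fin p) ℝ,
      F V = -Real.log ((s • (1 : Matrix (Fin p) (Fin p) ℝ) - Matrix.hadamard V V).det) +
        p * Real.log s)
    (W : Matrix (Fin p) (Fin p) ℝ)
    (hdet : 0 < (s • (1 : Matrix (Fin p) (Fin p) ℝ) - Matrix.hadamard W W).det) :
    ∃ L : Matrix (Fin p) (Fin p) ℝ →L[ℝ] ℝ,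
      HasFDerivAt F L W ∧
      ∀ V : Matrix (Fin p) (Fin p) ℝ,
        L V = ∑ j, ∑ k,
          ((2 : ℝ) • Matrix.hadamard
            ((s • (1 : Matrix (Fin p) (Fin p) ℝ) - Matrix.hadamard W W)⁻¹)ᵀ W) j k * V j k := by
  set A : Matrix (Fin p) (Fin p) ℝ := s • (1 : Matrix (Fin p) (Fin p) ℝ) - Matrix.hadamard W W
    with hA
  have hg := g_hasFDerivAt s W
  have hcomp : HasFDerivAt
      (fun V : Matrix (Fin p) (Fin p) ℝ =>
        (s • (1 : Matrix (Fin p) (Fin p) ℝ) - Matrix.hadamard V V).det)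
      (((detCM p).linearDeriv A).comp (gCLM W)) W :=
    (det_hasFDerivAt A).comp W hg
  have hlog := hcomp.log (ne_of_gt hdet)
  have hfin := (hlog.neg).add_const ((p : ℝ) * Real.log s)
  refine ⟨-(A.det⁻¹ • (((detCM p).linearDeriv A).comp (gCLM W))), ?_, ?_⟩
  · have hFfun : F = fun V : Matrix (Fin p) (Fin p) ℝ =>
        -Real.log ((s • (1 : Matrix (Fin p) (Fin p) ℝ) - Matrix.hadamard V V).det) +
          p * Real.log s := funext hF
    rw [hFfun]
    exact hfin
  · intro V
    show -((A.det⁻¹ • ((detCM p).linearDeriv A).comp (gCLM W)) V) = _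
    erw [ContinuousLinearMap.smul_apply, ContinuousLinearMap.comp_apply, linearDeriv_det_apply]
    simp_rw [det_updateRow_eq_sum]
    rw [smul_eq_mul, Finset.mul_sum, ← Finset.sum_neg_distrib]
    refine Finset.sum_congr rfl fun i _ => ?_
    rw [Finset.mul_sum, ← Finset.sum_neg_distrib]
    refine Finset.sum_congr rfl fun j _ => ?_
    have hin : (A⁻¹) j i = A.det⁻¹ * adjugate A j i := by
      rw [Matrix.inv_def, Matrix.smul_apply, Ring.inverse_eq_inv', smul_eq_mul]
    show -(A.det⁻¹ * ((-((2:ℝ) • Matrix.hadamard W V)) i j * A.adjugate j i)) = _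
    simp only [Matrix.neg_apply, Matrix.smul_apply, hadamard_apply, transpose_apply,
      smul_eq_mul, hin]
    ring
end

section
/- Let p ≥ 1, W̃ ∈ ℝ^{p×p} with |w̃_{jk}| ≤ 1 for all j, k, and let s ≥ 1 + max(‖W̃‖₁, ‖W̃‖_∞). Then for all W₁, W₂ ∈ ℝ^{p×p} with |entries of W_i| ≤ |corresponding entries of W̃| (i = 1, 2), the matrices sI − W₁∘W₁ and sI − W₂∘W₂ are invertible and ‖(sI − W₁∘W₁)^{-1} − (sI − W₂∘W₂)^{-1}‖_F ≤ 2p·‖W₁ − W₂‖_F. -/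
open Matrix

noncomputable def frobNorm {p : ℕ} (W : Matrix (Fin p) (Fin p) ℝ) : ℝ :=
  Real.sqrt (∑ j, ∑ k, (W j k) ^ 2)

noncomputable def colSumNorm {p : ℕ} (W : Matrix (Fin p) (Fin p) ℝ) : ℝ :=
  ⨆ k, ∑ j, |W j k|

noncomputable def rowSumNorm {p : ℕ} (W : Matrix (Fin p) (Fin p) ℝ) : ℝ :=
  ⨆ j, ∑ k, |W j k|

noncomputable def gradG {p : ℕ} (μ s : ℝ) (Wt W : Matrix (Fin p) (Fin p) ℝ) :
    Matrix (Fin p) (Fin p) ℝ :=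
  (μ / 2) • (W - Wt) +
    (2 : ℝ) • Matrix.hadamard ((s • (1 : Matrix (Fin p) (Fin p) ℝ) - Matrix.hadamard W W)⁻¹)ᵀ W

noncomputable def fObj {p : ℕ} (μ s : ℝ) (Wt W : Matrix (Fin p) (Fin p) ℝ) : ℝ :=
  μ / 2 * frobNorm (Wt - W) ^ 2 +
    (-Real.log ((s • (1 : Matrix (Fin p) (Fin p) ℝ) - Matrix.hadamard W W).det) +
      p * Real.log s)

noncomputable def specRad {p : ℕ} (M : Matrix (Fin p) (Fin p) ℝ) : ENNReal :=
  spectralRadius ℂ (M.map (algebraMap ℝ ℂ))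

noncomputable def specNorm {p : ℕ} (M : Matrix (Fin p) (Fin p) ℝ) : ℝ :=
  ‖LinearMap.toContinuousLinearMap (Matrix.toEuclideanLin M)‖

section LinftyAux

attribute [local instance] Matrix.linftyOpNormedRing Matrix.linftyOpNormedAlgebra

variable {p : ℕ}

@[local instance]
def matCompleteAux : CompleteSpace (Matrix (Fin p) (Fin p) ℝ) :=
  (inferInstance : CompleteSpace (Fin p → Fin p → ℝ))

lemma inv_bound (hp : 0 < p) (s : ℝ) (hs1 : 1 ≤ s) (M : Matrix (Fin p) (Fin p) ℝ)
    (hM : ∀ i, ∑ j, |M i j| ≤ s - 1) :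
    IsUnit (s • (1 : Matrix (Fin p) (Fin p) ℝ) - M) ∧
      ∀ i, ∑ j, |(s • (1 : Matrix (Fin p) (Fin p) ℝ) - M)⁻¹ i j| ≤ 1 := by
  have hspos : (0:ℝ) < s := lt_of_lt_of_le one_pos hs1
  have hMnorm : ‖M‖ ≤ s - 1 := by
    rw [Matrix.linfty_opNorm_def]
    have hne : (Finset.univ : Finset (Fin p)).Nonempty := by
      simpa [Finset.univ_nonempty_iff] using (Fin.pos_iff_nonempty.mp hp)
    obtain ⟨i, -, hi⟩ := Finset.exists_mem_eq_sup Finset.univ hne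
      (fun i : Fin p => ∑ j, ‖M i j‖₊)
    rw [hi]
    calc ((∑ j, ‖M i j‖₊ : NNReal) : ℝ) = ∑ j, |M i j| := by
          push_cast [Real.norm_eq_abs]
          simp [Real.norm_eq_abs]
      _ ≤ s - 1 := hM i
  set t : Matrix (Fin p) (Fin p) ℝ := s⁻¹ • M with ht_def
  have htnorm : ‖t‖ ≤ (s-1)/s := by
    rw [ht_def, norm_smul, Real.norm_eq_abs, abs_of_pos (inv_pos.mpr hspos)]
    rw [div_eq_inv_mul]
    exact mul_le_mul_of_nonneg_left hMnorm (le_of_lt (inv_pos.mpr hspos))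
  have htlt : ‖t‖ < 1 := lt_of_le_of_lt htnorm (by
    rw [div_lt_one hspos]; linarith)
  set u : (Matrix (Fin p) (Fin p) ℝ)ˣ := Units.oneSub t htlt with hu_def
  have hA : s • (1 : Matrix (Fin p) (Fin p) ℝ) - M = s • ((1 : Matrix (Fin p) (Fin p) ℝ) - t) := by
    rw [smul_sub, ht_def, smul_smul, mul_inv_cancel₀ (ne_of_gt hspos), one_smul]
  set B : Matrix (Fin p) (Fin p) ℝ := s⁻¹ • (↑u⁻¹ : Matrix (Fin p) (Fin p) ℝ) with hB_def
  have hAB : (s • (1 : Matrix (Fin p) (Fin p) ℝ) - M) * B = 1 := by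
    rw [hA, hB_def, smul_mul_assoc, mul_smul_comm, smul_smul, mul_inv_cancel₀ (ne_of_gt hspos),
      one_smul]
    have : ((1 : Matrix (Fin p) (Fin p) ℝ) - t) = (u : Matrix (Fin p) (Fin p) ℝ) := by
      rw [hu_def, Units.val_oneSub]
    rw [this, u.mul_inv]
  have hUnit : IsUnit (s • (1 : Matrix (Fin p) (Fin p) ℝ) - M) :=
    (Matrix.isUnit_iff_isUnit_det _).mpr (Matrix.isUnit_det_of_right_inverse hAB)
  have hinv : (s • (1 : Matrix (Fin p) (Fin p) ℝ) - M)⁻¹ = B := Matrix.inv_eq_right_inv hAB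
  refine ⟨hUnit, ?_⟩
  have hNonempty : Nonempty (Fin p) := Fin.pos_iff_nonempty.mp hp
  have huinv : ‖(↑u⁻¹ : Matrix (Fin p) (Fin p) ℝ)‖ ≤ s := by
    have : (↑u⁻¹ : Matrix (Fin p) (Fin p) ℝ) = ∑' n : ℕ, t ^ n := rfl
    rw [this]
    have h1 := tsum_geometric_le_of_norm_lt_one t htlt
    have hone : ‖(1 : Matrix (Fin p) (Fin p) ℝ)‖ = 1 := norm_one
    rw [hone] at h1
    have h2 : (1 - ‖t‖)⁻¹ ≤ s := by
      have hb : (1:ℝ)/s ≤ 1 - ‖t‖ := by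
        have : (s-1)/s = 1 - 1/s := by field_simp
        rw [this] at htnorm; linarith
      have hb0 : (0:ℝ) < 1/s := by positivity
      calc (1 - ‖t‖)⁻¹ ≤ (1/s)⁻¹ := by
            apply inv_anti₀ hb0 hb
        _ = s := by field_simp
    exact le_trans (h1.trans_eq (by ring)) h2
  have hBnorm : ‖(s • (1 : Matrix (Fin p) (Fin p) ℝ) - M)⁻¹‖ ≤ 1 := by
    rw [hinv, hB_def, norm_smul, Real.norm_eq_abs, abs_of_pos (inv_pos.mpr hspos)]
    calc s⁻¹ * ‖(↑u⁻¹ : Matrix (Fin p) (Fin p) ℝ)‖ ≤ s⁻¹ * s :=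
          mul_le_mul_of_nonneg_left huinv (le_of_lt (inv_pos.mpr hspos))
      _ = 1 := inv_mul_cancel₀ (ne_of_gt hspos)
  intro i
  set X := (s • (1 : Matrix (Fin p) (Fin p) ℝ) - M)⁻¹
  calc ∑ j, |X i j| = ((∑ j, ‖X i j‖₊ : NNReal) : ℝ) := by
        push_cast [Real.norm_eq_abs]; simp [Real.norm_eq_abs]
    _ ≤ ‖X‖ := by
        rw [Matrix.linfty_opNorm_def]
        exact_mod_cast NNReal.coe_le_coe.mpr
          (Finset.le_sup (f := fun i : Fin p => ∑ j, ‖X i j‖₊) (Finset.mem_univ i))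
    _ ≤ 1 := hBnorm

end LinftyAux

section FrobAux

attribute [local instance] Matrix.frobeniusNormedRing

variable {p : ℕ}

lemma frobNorm_eq_norm (A : Matrix (Fin p) (Fin p) ℝ) : frobNorm A = ‖A‖ := by
  rw [frobNorm, Matrix.frobenius_norm_def, Real.sqrt_eq_rpow]
  congr 1
  apply Finset.sum_congr rfl
  intro j _
  apply Finset.sum_congr rfl
  intro k _
  rw [Real.norm_eq_abs, show ((2:ℝ)) = ((2:ℕ):ℝ) by norm_num, Real.rpow_natCast, sq_abs]

lemma frobNorm_mul_le (A B : Matrix (Fin p) (Fin p) ℝ) :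
    frobNorm (A * B) ≤ frobNorm A * frobNorm B := by
  simp only [frobNorm_eq_norm]
  exact norm_mul_le A B

end FrobAux

lemma frobNorm_nonneg {p : ℕ} (A : Matrix (Fin p) (Fin p) ℝ) : 0 ≤ frobNorm A :=
  Real.sqrt_nonneg _

lemma frobNorm_le_sqrt {p : ℕ} (X : Matrix (Fin p) (Fin p) ℝ)
    (h : ∀ i, ∑ j, |X i j| ≤ 1) : frobNorm X ≤ Real.sqrt p := by
  rw [frobNorm]
  apply Real.sqrt_le_sqrt
  calc ∑ j, ∑ k, (X j k) ^ 2 ≤ ∑ j : Fin p, (1:ℝ) := by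
        apply Finset.sum_le_sum
        intro i _
        calc ∑ k, (X i k) ^ 2 = ∑ k, |X i k| ^ 2 := by simp [sq_abs]
          _ ≤ (∑ k, |X i k|) ^ 2 :=
              Finset.sum_sq_le_sq_sum_of_nonneg (fun k _ => abs_nonneg _)
          _ ≤ 1 ^ 2 := by
              apply pow_le_pow_left₀ (Finset.sum_nonneg fun k _ => abs_nonneg _) (h i)
          _ = 1 := one_pow 2
    _ = p := by simp
lemma frob_hadamard_diff {p : ℕ} (W₁ W₂ : Matrix (Fin p) (Fin p) ℝ)
    (h1 : ∀ j k, |W₁ j k| ≤ 1) (h2 : ∀ j k, |W₂ j k| ≤ 1) :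
    frobNorm (Matrix.hadamard W₁ W₁ - Matrix.hadamard W₂ W₂) ≤ 2 * frobNorm (W₁ - W₂) := by
  rw [frobNorm, frobNorm]
  have key : ∑ j, ∑ k, ((Matrix.hadamard W₁ W₁ - Matrix.hadamard W₂ W₂) j k) ^ 2 ≤
      4 * ∑ j, ∑ k, ((W₁ - W₂) j k) ^ 2 := by
    rw [Finset.mul_sum]
    apply Finset.sum_le_sum
    intro j _
    rw [Finset.mul_sum]
    apply Finset.sum_le_sum
    intro k _
    simp only [Matrix.sub_apply, Matrix.hadamard_apply]
    have e : W₁ j k * W₁ j k - W₂ j k * W₂ j k = (W₁ j k - W₂ j k) * (W₁ j k + W₂ j k) := by ring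
    rw [e, mul_pow]
    have hb : (W₁ j k + W₂ j k) ^ 2 ≤ 4 := by
      have := abs_add_le (W₁ j k) (W₂ j k)
      have h4 : |W₁ j k + W₂ j k| ≤ 2 := by
        have := h1 j k; have := h2 j k
        calc |W₁ j k + W₂ j k| ≤ |W₁ j k| + |W₂ j k| := abs_add_le _ _
          _ ≤ 2 := by linarith
      calc (W₁ j k + W₂ j k) ^ 2 = |W₁ j k + W₂ j k| ^ 2 := (sq_abs _).symm
        _ ≤ 2 ^ 2 := pow_le_pow_left₀ (abs_nonneg _) h4 2
        _ = 4 := by norm_num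
    calc (W₁ j k - W₂ j k) ^ 2 * (W₁ j k + W₂ j k) ^ 2
        ≤ (W₁ j k - W₂ j k) ^ 2 * 4 := mul_le_mul_of_nonneg_left hb (sq_nonneg _)
      _ = 4 * (W₁ j k - W₂ j k) ^ 2 := by ring
  calc Real.sqrt (∑ j, ∑ k, ((Matrix.hadamard W₁ W₁ - Matrix.hadamard W₂ W₂) j k) ^ 2)
      ≤ Real.sqrt (4 * ∑ j, ∑ k, ((W₁ - W₂) j k) ^ 2) := Real.sqrt_le_sqrt key
    _ = 2 * Real.sqrt (∑ j, ∑ k, ((W₁ - W₂) j k) ^ 2) := by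
        have h4 : Real.sqrt 4 = 2 := by
          rw [show (4:ℝ) = 2^2 by norm_num, Real.sqrt_sq (by norm_num : (0:ℝ) ≤ 2)]
        rw [Real.sqrt_mul (by norm_num : (0:ℝ) ≤ 4), h4]

/-- Lipschitz bound on the map W ↦ (sI − W∘W)⁻¹ over the box. -/
theorem stmt12 {p : ℕ} (hp : 1 ≤ p) (Wt : Matrix (Fin p) (Fin p) ℝ)
    (hWt : ∀ j k, |Wt j k| ≤ 1) (s : ℝ)
    (hs : 1 + max (colSumNorm Wt) (rowSumNorm Wt) ≤ s) :
    ∀ W₁ W₂ : Matrix (Fin p) (Fin p) ℝ,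
      (∀ j k, |W₁ j k| ≤ |Wt j k|) → (∀ j k, |W₂ j k| ≤ |Wt j k|) →
      IsUnit (s • (1 : Matrix (Fin p) (Fin p) ℝ) - Matrix.hadamard W₁ W₁) ∧
      IsUnit (s • (1 : Matrix (Fin p) (Fin p) ℝ) - Matrix.hadamard W₂ W₂) ∧
      frobNorm ((s • (1 : Matrix (Fin p) (Fin p) ℝ) - Matrix.hadamard W₁ W₁)⁻¹ -
          (s • (1 : Matrix (Fin p) (Fin p) ℝ) - Matrix.hadamard W₂ W₂)⁻¹) ≤
        2 * p * frobNorm (W₁ - W₂) := by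
  intro W₁ W₂ hW₁ hW₂
  have hp0 : 0 < p := hp
  have hNonempty : Nonempty (Fin p) := Fin.pos_iff_nonempty.mp hp0
  -- s ≥ 1
  have hcol0 : 0 ≤ colSumNorm Wt := by
    obtain ⟨k⟩ := hNonempty
    calc (0:ℝ) ≤ ∑ j, |Wt j k| := Finset.sum_nonneg fun _ _ => abs_nonneg _
      _ ≤ colSumNorm Wt := by
          rw [colSumNorm]
          exact le_ciSup (f := fun k : Fin p => ∑ j, |Wt j k|)
            (Set.Finite.bddAbove (Set.finite_range _)) k
  have hs1 : 1 ≤ s := by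
    have := le_max_left (colSumNorm Wt) (rowSumNorm Wt)
    linarith
  -- row-sum bounds for the hadamard squares
  have hrow : ∀ (W : Matrix (Fin p) (Fin p) ℝ), (∀ j k, |W j k| ≤ |Wt j k|) →
      ∀ i, ∑ j, |Matrix.hadamard W W i j| ≤ s - 1 := by
    intro W hW i
    have h1 : ∑ j, |Matrix.hadamard W W i j| ≤ ∑ j, |Wt i j| := by
      apply Finset.sum_le_sum
      intro j _
      simp only [Matrix.hadamard_apply, abs_mul]
      calc |W i j| * |W i j| ≤ |Wt i j| * |Wt i j| :=
            mul_le_mul (hW i j) (hW i j) (abs_nonneg _) (abs_nonneg _)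
        _ ≤ 1 * |Wt i j| := mul_le_mul_of_nonneg_right (hWt i j) (abs_nonneg _)
        _ = |Wt i j| := one_mul _
    have h2 : ∑ j, |Wt i j| ≤ rowSumNorm Wt := by
      rw [rowSumNorm]
      exact le_ciSup (f := fun j : Fin p => ∑ k, |Wt j k|)
        (Set.Finite.bddAbove (Set.finite_range _)) i
    have h3 := le_max_right (colSumNorm Wt) (rowSumNorm Wt)
    linarith
  obtain ⟨hU₁, hrow₁⟩ := inv_bound hp0 s hs1 (Matrix.hadamard W₁ W₁) (hrow W₁ hW₁)
  obtain ⟨hU₂, hrow₂⟩ := inv_bound hp0 s hs1 (Matrix.hadamard W₂ W₂) (hrow W₂ hW₂)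
  refine ⟨hU₁, hU₂, ?_⟩
  set A₁ := s • (1 : Matrix (Fin p) (Fin p) ℝ) - Matrix.hadamard W₁ W₁ with hA₁
  set A₂ := s • (1 : Matrix (Fin p) (Fin p) ℝ) - Matrix.hadamard W₂ W₂ with hA₂
  have hd₁ : IsUnit A₁.det := (Matrix.isUnit_iff_isUnit_det _).mp hU₁
  have hd₂ : IsUnit A₂.det := (Matrix.isUnit_iff_isUnit_det _).mp hU₂
  have key : A₁⁻¹ - A₂⁻¹ = A₁⁻¹ * (Matrix.hadamard W₁ W₁ - Matrix.hadamard W₂ W₂) * A₂⁻¹ := by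
    have e : Matrix.hadamard W₁ W₁ - Matrix.hadamard W₂ W₂ = A₂ - A₁ := by
      rw [hA₁, hA₂]; abel
    rw [e, Matrix.mul_sub, Matrix.sub_mul, Matrix.mul_assoc,
      Matrix.mul_nonsing_inv _ hd₂, Matrix.mul_one, Matrix.nonsing_inv_mul _ hd₁,
      Matrix.one_mul]
  rw [key]
  have hf₁ : frobNorm A₁⁻¹ ≤ Real.sqrt p := frobNorm_le_sqrt _ hrow₁
  have hf₂ : frobNorm A₂⁻¹ ≤ Real.sqrt p := frobNorm_le_sqrt _ hrow₂
  have hWt1 : ∀ j k, |W₁ j k| ≤ 1 := fun j k => le_trans (hW₁ j k) (hWt j k)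
  have hWt2 : ∀ j k, |W₂ j k| ≤ 1 := fun j k => le_trans (hW₂ j k) (hWt j k)
  have hhad : frobNorm (Matrix.hadamard W₁ W₁ - Matrix.hadamard W₂ W₂) ≤ 2 * frobNorm (W₁ - W₂) :=
    frob_hadamard_diff W₁ W₂ hWt1 hWt2
  have hsqrtp : (0:ℝ) ≤ Real.sqrt p := Real.sqrt_nonneg _
  calc frobNorm (A₁⁻¹ * (Matrix.hadamard W₁ W₁ - Matrix.hadamard W₂ W₂) * A₂⁻¹)
      ≤ frobNorm (A₁⁻¹ * (Matrix.hadamard W₁ W₁ - Matrix.hadamard W₂ W₂)) * frobNorm A₂⁻¹ :=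
        frobNorm_mul_le _ _
    _ ≤ (frobNorm A₁⁻¹ * frobNorm (Matrix.hadamard W₁ W₁ - Matrix.hadamard W₂ W₂)) *
          frobNorm A₂⁻¹ := by
        apply mul_le_mul_of_nonneg_right (frobNorm_mul_le _ _) (frobNorm_nonneg _)
    _ ≤ (Real.sqrt p * (2 * frobNorm (W₁ - W₂))) * Real.sqrt p := by
        apply mul_le_mul
        · apply mul_le_mul hf₁ hhad (frobNorm_nonneg _) hsqrtp
        · exact hf₂
        · exact frobNorm_nonneg _
        · exact mul_nonneg (Real.sqrt_nonneg _) (mul_nonneg (by norm_num) (frobNorm_nonneg _))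
    _ = (Real.sqrt p * Real.sqrt p) * (2 * frobNorm (W₁ - W₂)) := by ring
    _ = 2 * p * frobNorm (W₁ - W₂) := by
        rw [Real.mul_self_sqrt (Nat.cast_nonneg p)]; ring
end

section
/- Let p ≥ 1, W̃ ∈ ℝ^{p×p} with |w̃_{jk}| ≤ 1 for all j, k, and let s ≥ 1 + max(‖W̃‖₁, ‖W̃‖_∞). Define H(W) := 2((sI − W∘W)^{-1})^T ∘ W. Then for all W₁, W₂ ∈ ℝ^{p×p} with |entries of W_i| ≤ |corresponding entries of W̃| (i = 1, 2), it holds that ‖H(W₁) − H(W₂)‖_F ≤ (2√p + 4p‖W̃‖_F)·‖W₁ − W₂‖_F. -/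
open Matrix

namespace Stmt13Aux


variable {p : ℕ}

lemma frobNorm_eq (W : Matrix (Fin p) (Fin p) ℝ) :
    frobNorm W = ‖(WithLp.equiv 2 (Fin p × Fin p → ℝ)).symm (fun jk => W jk.1 jk.2)‖ := by
  rw [EuclideanSpace.norm_eq, frobNorm]
  congr 1
  rw [Fintype.sum_prod_type]
  refine Finset.sum_congr rfl fun j _ => Finset.sum_congr rfl fun k _ => ?_
  simp [Real.norm_eq_abs, sq_abs]

lemma frobNorm_nonneg (W : Matrix (Fin p) (Fin p) ℝ) : 0 ≤ frobNorm W :=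
  Real.sqrt_nonneg _

lemma frobNorm_mono {U V : Matrix (Fin p) (Fin p) ℝ} (h : ∀ j k, |U j k| ≤ |V j k|) :
    frobNorm U ≤ frobNorm V := by
  apply Real.sqrt_le_sqrt
  refine Finset.sum_le_sum fun j _ => Finset.sum_le_sum fun k _ => ?_
  rw [← sq_abs (U j k), ← sq_abs (V j k)]
  exact pow_le_pow_left₀ (abs_nonneg _) (h j k) 2

lemma abs_entry_le_frobNorm (W : Matrix (Fin p) (Fin p) ℝ) (j k : Fin p) :
    |W j k| ≤ frobNorm W := by
  rw [← Real.sqrt_sq_eq_abs]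
  apply Real.sqrt_le_sqrt
  calc W j k ^ 2 ≤ ∑ k', (W j k') ^ 2 :=
        Finset.single_le_sum (f := fun k' => (W j k') ^ 2)
          (fun k' _ => sq_nonneg _) (Finset.mem_univ k)
    _ ≤ ∑ j', ∑ k', (W j' k') ^ 2 :=
        Finset.single_le_sum (f := fun j' => ∑ k', (W j' k') ^ 2)
          (fun j' _ => Finset.sum_nonneg fun k' _ => sq_nonneg _) (Finset.mem_univ j)

lemma frobNorm_add_le (U V : Matrix (Fin p) (Fin p) ℝ) :
    frobNorm (U + V) ≤ frobNorm U + frobNorm V := by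
  rw [frobNorm_eq, frobNorm_eq, frobNorm_eq]
  have : (WithLp.equiv 2 (Fin p × Fin p → ℝ)).symm (fun jk => (U + V) jk.1 jk.2)
      = (WithLp.equiv 2 (Fin p × Fin p → ℝ)).symm (fun jk => U jk.1 jk.2)
        + (WithLp.equiv 2 (Fin p × Fin p → ℝ)).symm (fun jk => V jk.1 jk.2) := rfl
  rw [this]
  exact norm_add_le _ _

lemma frobNorm_smul (c : ℝ) (W : Matrix (Fin p) (Fin p) ℝ) :
    frobNorm (c • W) = |c| * frobNorm W := by
  rw [frobNorm, frobNorm]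
  simp_rw [Matrix.smul_apply, smul_eq_mul, mul_pow, ← Finset.mul_sum]
  rw [Real.sqrt_mul (sq_nonneg c), Real.sqrt_sq_eq_abs]

lemma frobNorm_le_of_le_add {D U V : Matrix (Fin p) (Fin p) ℝ}
    (h : ∀ j k, |D j k| ≤ |U j k| + |V j k|) :
    frobNorm D ≤ frobNorm U + frobNorm V := by
  set U' : Matrix (Fin p) (Fin p) ℝ := Matrix.of fun j k => |U j k| with hU'
  set V' : Matrix (Fin p) (Fin p) ℝ := Matrix.of fun j k => |V j k| with hV'
  have h1 : frobNorm D ≤ frobNorm (U' + V') := by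
    apply frobNorm_mono
    intro j k
    have : (U' + V') j k = |U j k| + |V j k| := rfl
    rw [this, abs_of_nonneg (by positivity : (0:ℝ) ≤ |U j k| + |V j k|)]
    exact h j k
  have hU : frobNorm U' = frobNorm U := by
    rw [frobNorm, frobNorm]; congr 1
    exact Finset.sum_congr rfl fun j _ => Finset.sum_congr rfl fun k _ => by
      simp [hU', sq_abs]
  have hV : frobNorm V' = frobNorm V := by
    rw [frobNorm, frobNorm]; congr 1
    exact Finset.sum_congr rfl fun j _ => Finset.sum_congr rfl fun k _ => by
      simp [hV', sq_abs]
  calc frobNorm D ≤ frobNorm (U' + V') := h1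
    _ ≤ frobNorm U' + frobNorm V' := frobNorm_add_le _ _
    _ = frobNorm U + frobNorm V := by rw [hU, hV]



section Inverse
variable {p : ℕ}

attribute [local instance] Matrix.linftyOpNormedRing Matrix.linftyOpNormedAlgebra

lemma inv_nonneg_of (s : ℝ) (hs1 : 1 ≤ s) (M : Matrix (Fin p) (Fin p) ℝ)
    (hM0 : ∀ j k, 0 ≤ M j k) (hrow : ∀ j, ∑ k, M j k ≤ s - 1) :
    IsUnit (s • (1 : Matrix (Fin p) (Fin p) ℝ) - M).det ∧
      ∀ j k, 0 ≤ (s • (1 : Matrix (Fin p) (Fin p) ℝ) - M)⁻¹ j k := by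
  have hs0 : (0:ℝ) < s := lt_of_lt_of_le one_pos hs1
  set t : Matrix (Fin p) (Fin p) ℝ := s⁻¹ • M with ht
  have ht0 : ∀ j k, 0 ≤ t j k := fun j k => by
    simp only [ht, Matrix.smul_apply, smul_eq_mul]
    exact mul_nonneg (inv_nonneg.mpr (le_of_lt hs0)) (hM0 j k)
  have htrow : ∀ j, ∑ k, t j k < 1 := by
    intro j
    have : ∑ k, t j k = s⁻¹ * ∑ k, M j k := by
      simp [ht, Finset.mul_sum]
    rw [this]
    calc s⁻¹ * ∑ k, M j k ≤ s⁻¹ * (s - 1) := by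
          exact mul_le_mul_of_nonneg_left (hrow j) (by positivity)
      _ < 1 := by
          rw [inv_mul_lt_iff₀ hs0]; linarith
  have hnorm : ‖t‖ < 1 := by
    have h1 : ‖t‖₊ < 1 := by
      rw [Matrix.linfty_opNNNorm_def]
      refine Finset.sup_lt_iff (by norm_num) |>.mpr fun j _ => ?_
      have : ((∑ k, ‖t j k‖₊ : NNReal) : ℝ) < 1 := by
        push_cast
        calc ∑ k, ‖t j k‖ = ∑ k, t j k :=
              Finset.sum_congr rfl fun k _ => Real.norm_of_nonneg (ht0 j k)
          _ < 1 := htrow j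
      exact_mod_cast this
    calc ‖t‖ = ((‖t‖₊ : NNReal) : ℝ) := rfl
      _ < 1 := by exact_mod_cast h1
  have hunit : IsUnit ((1 : Matrix (Fin p) (Fin p) ℝ) - t) :=
    isUnit_one_sub_of_norm_lt_one hnorm
  have hsum : HasSum (fun n => t ^ n) (Ring.inverse ((1 : Matrix (Fin p) (Fin p) ℝ) - t)) :=
    hasSum_geom_series_inverse t hnorm
  have hpow : ∀ n j k, 0 ≤ (t ^ n) j k := by
    intro n
    induction n with
    | zero => intro j k; simp [Matrix.one_apply]; split <;> norm_num
    | succ n ih =>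
      intro j k
      rw [pow_succ, Matrix.mul_apply]
      exact Finset.sum_nonneg fun a _ => mul_nonneg (ih j a) (ht0 a k)
  have hentry : ∀ j k, 0 ≤ Ring.inverse ((1 : Matrix (Fin p) (Fin p) ℝ) - t) j k := by
    intro j k
    let E : Matrix (Fin p) (Fin p) ℝ →ₗ[ℝ] ℝ :=
      { toFun := fun A => A j k
        map_add' := fun A B => rfl
        map_smul' := fun c A => rfl }
    have hsum' : HasSum (fun n => (t ^ n) j k)
        (Ring.inverse ((1 : Matrix (Fin p) (Fin p) ℝ) - t) j k) :=
      (LinearMap.toContinuousLinearMap E).hasSum hsum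
    exact hsum'.nonneg fun n => hpow n j k
  -- relate A and 1 - t
  have hA : s • (1 : Matrix (Fin p) (Fin p) ℝ) - M
      = s • ((1 : Matrix (Fin p) (Fin p) ℝ) - t) := by
    rw [smul_sub, ht, smul_smul, mul_inv_cancel₀ (ne_of_gt hs0), one_smul]
  have hdet1t : IsUnit ((1 : Matrix (Fin p) (Fin p) ℝ) - t).det :=
    (Matrix.isUnit_iff_isUnit_det _).mp hunit
  have hdetA : IsUnit (s • (1 : Matrix (Fin p) (Fin p) ℝ) - M).det := by
    rw [hA, Matrix.det_smul]
    exact (IsUnit.pow _ (isUnit_iff_ne_zero.mpr (ne_of_gt hs0))).mul hdet1t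
  refine ⟨hdetA, fun j k => ?_⟩
  haveI : Invertible s := invertibleOfNonzero (ne_of_gt hs0)
  have hinv : (s • (1 : Matrix (Fin p) (Fin p) ℝ) - M)⁻¹
      = s⁻¹ • ((1 : Matrix (Fin p) (Fin p) ℝ) - t)⁻¹ := by
    rw [hA, Matrix.inv_smul ((1 : Matrix (Fin p) (Fin p) ℝ) - t) s hdet1t, invOf_eq_inv]
  rw [hinv, Matrix.smul_apply, smul_eq_mul, Matrix.nonsing_inv_eq_ringInverse]
  exact mul_nonneg (by positivity) (hentry j k)

end Inverse

variable {p : ℕ}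

lemma rowsum_inv_le (A : Matrix (Fin p) (Fin p) ℝ) (hA : IsUnit A.det)
    (hinv0 : ∀ j k, 0 ≤ A⁻¹ j k) (hArow : ∀ a, 1 ≤ ∑ k, A a k) :
    ∀ j, ∑ k, A⁻¹ j k ≤ 1 := by
  intro j
  have h1 : ∑ k, (A⁻¹ * A) j k = 1 := by
    rw [Matrix.nonsing_inv_mul A hA]
    simp [Matrix.one_apply]
  have h2 : ∑ k, (A⁻¹ * A) j k = ∑ a, A⁻¹ j a * ∑ k, A a k := by
    simp_rw [Matrix.mul_apply, Finset.mul_sum]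
    rw [Finset.sum_comm]
  calc ∑ k, A⁻¹ j k = ∑ a, A⁻¹ j a * 1 := by simp
    _ ≤ ∑ a, A⁻¹ j a * ∑ k, A a k :=
        Finset.sum_le_sum fun a _ => mul_le_mul_of_nonneg_left (hArow a) (hinv0 j a)
    _ = 1 := by rw [← h2, h1]

lemma colsum_inv_le (A : Matrix (Fin p) (Fin p) ℝ) (hA : IsUnit A.det)
    (hinv0 : ∀ j k, 0 ≤ A⁻¹ j k) (hAcol : ∀ a, 1 ≤ ∑ j, A j a) :
    ∀ k, ∑ j, A⁻¹ j k ≤ 1 := by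
  intro k
  have hdet : IsUnit Aᵀ.det := by rwa [Matrix.det_transpose]
  have h := rowsum_inv_le Aᵀ hdet
    (fun j k => by rw [← Matrix.transpose_nonsing_inv]; exact hinv0 k j)
    (fun a => by simpa using hAcol a) k
  calc ∑ j, A⁻¹ j k = ∑ j, (Aᵀ)⁻¹ k j := by
        refine Finset.sum_congr rfl fun j _ => ?_
        rw [← Matrix.transpose_nonsing_inv, Matrix.transpose_apply]
    _ ≤ 1 := h


end Stmt13Aux

/-- Lipschitz bound for the gradient H of the DAGMA acyclicity
function over the box. -/
theorem stmt13 {p : ℕ} (hp : 1 ≤ p) (Wt : Matrix (Fin p) (Fin p) ℝ)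
    (hWt : ∀ j k, |Wt j k| ≤ 1) (s : ℝ)
    (hs : 1 + max (colSumNorm Wt) (rowSumNorm Wt) ≤ s)
    (H : Matrix (Fin p) (Fin p) ℝ → Matrix (Fin p) (Fin p) ℝ)
    (hH : ∀ W : Matrix (Fin p) (Fin p) ℝ,
      H W = (2 : ℝ) • Matrix.hadamard
        ((s • (1 : Matrix (Fin p) (Fin p) ℝ) - Matrix.hadamard W W)⁻¹)ᵀ W) :
    ∀ W₁ W₂ : Matrix (Fin p) (Fin p) ℝ,
      (∀ j k, |W₁ j k| ≤ |Wt j k|) → (∀ j k, |W₂ j k| ≤ |Wt j k|) →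
      frobNorm (H W₁ - H W₂) ≤ (2 * Real.sqrt p + 4 * p * frobNorm Wt) * frobNorm (W₁ - W₂) := by
  intro W₁ W₂ h1 h2
  haveI : Nonempty (Fin p) := Fin.pos_iff_nonempty.mp hp
  -- row and column sums of |Wt| are at most s - 1
  have hmax : max (colSumNorm Wt) (rowSumNorm Wt) ≤ s - 1 := by linarith
  have hrowWt : ∀ j, ∑ k, |Wt j k| ≤ s - 1 := by
    intro j
    have h : ∑ k, |Wt j k| ≤ rowSumNorm Wt := by
      rw [rowSumNorm]
      exact le_ciSup (f := fun j => ∑ k, |Wt j k|)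
        (Set.Finite.bddAbove (Set.finite_range _)) j
    linarith [le_max_right (colSumNorm Wt) (rowSumNorm Wt)]
  have hcolWt : ∀ k, ∑ j, |Wt j k| ≤ s - 1 := by
    intro k
    have h : ∑ j, |Wt j k| ≤ colSumNorm Wt := by
      rw [colSumNorm]
      exact le_ciSup (f := fun k => ∑ j, |Wt j k|)
        (Set.Finite.bddAbove (Set.finite_range _)) k
    linarith [le_max_left (colSumNorm Wt) (rowSumNorm Wt)]
  have hs1 : 1 ≤ s := by
    obtain ⟨j0⟩ := (inferInstance : Nonempty (Fin p))
    have h0 : (0:ℝ) ≤ ∑ k, |Wt j0 k| := Finset.sum_nonneg fun k _ => abs_nonneg _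
    linarith [hrowWt j0]
  -- setup
  set Δ : Matrix (Fin p) (Fin p) ℝ := W₁ - W₂ with hΔ
  have hfΔ : 0 ≤ frobNorm Δ := Stmt13Aux.frobNorm_nonneg Δ
  set A₁ : Matrix (Fin p) (Fin p) ℝ :=
    s • (1 : Matrix (Fin p) (Fin p) ℝ) - Matrix.hadamard W₁ W₁ with hA₁
  set A₂ : Matrix (Fin p) (Fin p) ℝ :=
    s • (1 : Matrix (Fin p) (Fin p) ℝ) - Matrix.hadamard W₂ W₂ with hA₂
  -- bounds on the hadamard squares
  have hMbound : ∀ (W : Matrix (Fin p) (Fin p) ℝ), (∀ j k, |W j k| ≤ |Wt j k|) →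
      ∀ j k, W j k * W j k ≤ |Wt j k| := by
    intro W hW j k
    have h1' := hW j k
    have h2' := hWt j k
    have h3' := abs_nonneg (W j k)
    nlinarith [abs_mul_abs_self (W j k)]
  have hM0 : ∀ (W : Matrix (Fin p) (Fin p) ℝ) (j k : Fin p),
      0 ≤ Matrix.hadamard W W j k := fun W j k => mul_self_nonneg _
  have hMrow : ∀ (W : Matrix (Fin p) (Fin p) ℝ), (∀ j k, |W j k| ≤ |Wt j k|) →
      ∀ j, ∑ k, Matrix.hadamard W W j k ≤ s - 1 := by
    intro W hW j
    calc ∑ k, Matrix.hadamard W W j k ≤ ∑ k, |Wt j k| :=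
          Finset.sum_le_sum fun k _ => hMbound W hW j k
      _ ≤ s - 1 := hrowWt j
  have hMcol : ∀ (W : Matrix (Fin p) (Fin p) ℝ), (∀ j k, |W j k| ≤ |Wt j k|) →
      ∀ k, ∑ j, Matrix.hadamard W W j k ≤ s - 1 := by
    intro W hW k
    calc ∑ j, Matrix.hadamard W W j k ≤ ∑ j, |Wt j k| :=
          Finset.sum_le_sum fun j _ => hMbound W hW j k
      _ ≤ s - 1 := hcolWt k
  -- invertibility and nonnegativity of inverses
  obtain ⟨hdet₁, hinv0₁⟩ := Stmt13Aux.inv_nonneg_of s hs1 (Matrix.hadamard W₁ W₁)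
    (hM0 W₁) (hMrow W₁ h1)
  obtain ⟨hdet₂, hinv0₂⟩ := Stmt13Aux.inv_nonneg_of s hs1 (Matrix.hadamard W₂ W₂)
    (hM0 W₂) (hMrow W₂ h2)
  rw [← hA₁] at hdet₁ hinv0₁
  rw [← hA₂] at hdet₂ hinv0₂
  -- row and column sums of A are at least 1
  have hArowsum : ∀ (W : Matrix (Fin p) (Fin p) ℝ) (a : Fin p),
      ∑ k, (s • (1 : Matrix (Fin p) (Fin p) ℝ) - Matrix.hadamard W W) a k
        = s - ∑ k, Matrix.hadamard W W a k := by
    intro W a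
    simp only [Matrix.sub_apply, Finset.sum_sub_distrib]
    congr 1
    simp [Matrix.smul_apply, Matrix.one_apply, mul_ite]
  have hAcolsum : ∀ (W : Matrix (Fin p) (Fin p) ℝ) (a : Fin p),
      ∑ j, (s • (1 : Matrix (Fin p) (Fin p) ℝ) - Matrix.hadamard W W) j a
        = s - ∑ j, Matrix.hadamard W W j a := by
    intro W a
    simp only [Matrix.sub_apply, Finset.sum_sub_distrib]
    congr 1
    simp [Matrix.smul_apply, Matrix.one_apply, mul_ite]
  have hrowA₁ : ∀ a, 1 ≤ ∑ k, A₁ a k := fun a => by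
    rw [hA₁, hArowsum W₁ a]; linarith [hMrow W₁ h1 a]
  have hrowA₂ : ∀ a, 1 ≤ ∑ k, A₂ a k := fun a => by
    rw [hA₂, hArowsum W₂ a]; linarith [hMrow W₂ h2 a]
  have hcolA₁ : ∀ a, 1 ≤ ∑ j, A₁ j a := fun a => by
    rw [hA₁, hAcolsum W₁ a]; linarith [hMcol W₁ h1 a]
  have hcolA₂ : ∀ a, 1 ≤ ∑ j, A₂ j a := fun a => by
    rw [hA₂, hAcolsum W₂ a]; linarith [hMcol W₂ h2 a]
  have hrowInv₁ : ∀ j, ∑ k, A₁⁻¹ j k ≤ 1 := Stmt13Aux.rowsum_inv_le A₁ hdet₁ hinv0₁ hrowA₁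
  have hcolInv₂ : ∀ k, ∑ j, A₂⁻¹ j k ≤ 1 := Stmt13Aux.colsum_inv_le A₂ hdet₂ hinv0₂ hcolA₂
  -- entry bound on A₁⁻¹
  have hentry₁ : ∀ k j, |A₁⁻¹ k j| ≤ 1 := by
    intro k j
    rw [abs_of_nonneg (hinv0₁ k j)]
    calc A₁⁻¹ k j ≤ ∑ k', A₁⁻¹ k k' :=
          Finset.single_le_sum (f := fun k' => A₁⁻¹ k k')
            (fun k' _ => hinv0₁ k k') (Finset.mem_univ j)
      _ ≤ 1 := hrowInv₁ k
  -- bound on entries of A₂ - A₁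
  have hB : ∀ a b, |(A₂ - A₁) a b| ≤ 2 * frobNorm Δ := by
    intro a b
    have hval : (A₂ - A₁) a b
        = (W₁ a b + W₂ a b) * (W₁ a b - W₂ a b) := by
      simp only [hA₁, hA₂, Matrix.sub_apply, Matrix.hadamard_apply]
      ring
    rw [hval, abs_mul]
    have hb1 : |W₁ a b + W₂ a b| ≤ 2 := by
      calc |W₁ a b + W₂ a b| ≤ |W₁ a b| + |W₂ a b| := abs_add_le _ _
        _ ≤ |Wt a b| + |Wt a b| := add_le_add (h1 a b) (h2 a b)
        _ ≤ 2 := by linarith [hWt a b]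
    have hb2 : |W₁ a b - W₂ a b| ≤ frobNorm Δ := Stmt13Aux.abs_entry_le_frobNorm Δ a b
    exact mul_le_mul hb1 hb2 (abs_nonneg _) (by norm_num)
  -- resolvent identity
  have hCid : A₁⁻¹ - A₂⁻¹ = A₁⁻¹ * (A₂ - A₁) * A₂⁻¹ := by
    rw [Matrix.mul_sub, Matrix.nonsing_inv_mul A₁ hdet₁, Matrix.sub_mul, one_mul,
      Matrix.mul_assoc, Matrix.mul_nonsing_inv A₂ hdet₂, Matrix.mul_one]
  -- bound on entries of A₁⁻¹ - A₂⁻¹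
  have hC : ∀ k j, |(A₁⁻¹ - A₂⁻¹) k j| ≤ 2 * frobNorm Δ := by
    intro k j
    rw [hCid, Matrix.mul_apply]
    have hXB : ∀ b, |(A₁⁻¹ * (A₂ - A₁)) k b| ≤ 2 * frobNorm Δ := by
      intro b
      rw [Matrix.mul_apply]
      calc |∑ a, A₁⁻¹ k a * (A₂ - A₁) a b| ≤ ∑ a, |A₁⁻¹ k a * (A₂ - A₁) a b| :=
            Finset.abs_sum_le_sum_abs _ _
        _ ≤ ∑ a, A₁⁻¹ k a * (2 * frobNorm Δ) := by
            refine Finset.sum_le_sum fun a _ => ?_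
            rw [abs_mul, abs_of_nonneg (hinv0₁ k a)]
            exact mul_le_mul_of_nonneg_left (hB a b) (hinv0₁ k a)
        _ = (∑ a, A₁⁻¹ k a) * (2 * frobNorm Δ) := (Finset.sum_mul _ _ _).symm
        _ ≤ 1 * (2 * frobNorm Δ) :=
            mul_le_mul_of_nonneg_right (hrowInv₁ k) (by positivity)
        _ = 2 * frobNorm Δ := one_mul _
    calc |∑ b, (A₁⁻¹ * (A₂ - A₁)) k b * A₂⁻¹ b j|
        ≤ ∑ b, |(A₁⁻¹ * (A₂ - A₁)) k b * A₂⁻¹ b j| := Finset.abs_sum_le_sum_abs _ _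
      _ ≤ ∑ b, (2 * frobNorm Δ) * A₂⁻¹ b j := by
          refine Finset.sum_le_sum fun b _ => ?_
          rw [abs_mul, abs_of_nonneg (hinv0₂ b j)]
          exact mul_le_mul_of_nonneg_right (hXB b) (hinv0₂ b j)
      _ = (2 * frobNorm Δ) * ∑ b, A₂⁻¹ b j := (Finset.mul_sum _ _ _).symm
      _ ≤ (2 * frobNorm Δ) * 1 :=
          mul_le_mul_of_nonneg_left (hcolInv₂ j) (by positivity)
      _ = 2 * frobNorm Δ := mul_one _
  -- entrywise expansion of the difference of gradients
  have hD : ∀ j k, (H W₁ - H W₂) j k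
      = 2 * (A₁⁻¹ k j) * Δ j k + 2 * ((A₁⁻¹ - A₂⁻¹) k j) * W₂ j k := by
    intro j k
    simp only [hH, Matrix.sub_apply, Matrix.smul_apply, Matrix.hadamard_apply,
      Matrix.transpose_apply, smul_eq_mul, hΔ, ← hA₁, ← hA₂]
    ring
  -- entrywise bound
  set U := (2:ℝ) • Δ with hU
  set V := (4 * frobNorm Δ) • Wt with hV
  have hDabs : ∀ j k, |(H W₁ - H W₂) j k| ≤ |U j k| + |V j k| := by
    intro j k
    have e1 : |2 * (A₁⁻¹ k j) * Δ j k| ≤ |U j k| := by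
      have : |U j k| = 2 * |Δ j k| := by
        simp [hU, Matrix.smul_apply, abs_mul]
      rw [this, abs_mul, abs_mul, abs_two]
      have := hentry₁ k j
      have := abs_nonneg (Δ j k)
      nlinarith [abs_nonneg (A₁⁻¹ k j)]
    have e2 : |2 * ((A₁⁻¹ - A₂⁻¹) k j) * W₂ j k| ≤ |V j k| := by
      have hVv : |V j k| = (4 * frobNorm Δ) * |Wt j k| := by
        rw [hV, Matrix.smul_apply, smul_eq_mul, abs_mul,
          abs_of_nonneg (by positivity : (0:ℝ) ≤ 4 * frobNorm Δ)]
      rw [hVv, abs_mul, abs_mul, abs_two]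
      have hc := hC k j
      have hw : |W₂ j k| ≤ |Wt j k| := h2 j k
      nlinarith [abs_nonneg ((A₁⁻¹ - A₂⁻¹) k j), abs_nonneg (W₂ j k), abs_nonneg (Wt j k)]
    calc |(H W₁ - H W₂) j k|
        = |2 * (A₁⁻¹ k j) * Δ j k + 2 * ((A₁⁻¹ - A₂⁻¹) k j) * W₂ j k| := by rw [hD]
      _ ≤ |2 * (A₁⁻¹ k j) * Δ j k| + |2 * ((A₁⁻¹ - A₂⁻¹) k j) * W₂ j k| := abs_add_le _ _
      _ ≤ |U j k| + |V j k| := add_le_add e1 e2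
  -- Frobenius bound
  have hfrob : frobNorm (H W₁ - H W₂) ≤ 2 * frobNorm Δ + 4 * frobNorm Δ * frobNorm Wt := by
    calc frobNorm (H W₁ - H W₂) ≤ frobNorm U + frobNorm V :=
          Stmt13Aux.frobNorm_le_of_le_add hDabs
      _ = 2 * frobNorm Δ + 4 * frobNorm Δ * frobNorm Wt := by
          rw [hU, hV, Stmt13Aux.frobNorm_smul, Stmt13Aux.frobNorm_smul,
            abs_of_nonneg (by norm_num : (0:ℝ) ≤ 2),
            abs_of_nonneg (by positivity : (0:ℝ) ≤ 4 * frobNorm Δ)]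
  -- conclude
  have hsqrt : 1 ≤ Real.sqrt p := by
    rw [show (1:ℝ) = Real.sqrt 1 by simp]
    exact Real.sqrt_le_sqrt (by exact_mod_cast hp)
  have hp' : (1:ℝ) ≤ (p:ℝ) := by exact_mod_cast hp
  have hfWt : 0 ≤ frobNorm Wt := Stmt13Aux.frobNorm_nonneg Wt
  calc frobNorm (H W₁ - H W₂) ≤ 2 * frobNorm Δ + 4 * frobNorm Δ * frobNorm Wt := hfrob
    _ ≤ (2 * Real.sqrt p + 4 * p * frobNorm Wt) * frobNorm Δ := by
        nlinarith [mul_nonneg (sub_nonneg.mpr hsqrt) hfΔ,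
          mul_nonneg (mul_nonneg (sub_nonneg.mpr hp') hfWt) hfΔ]
end

section
/- Let M ∈ ℝ^{p×p} be entrywise nonnegative with ρ(M) < s for some s > 0. Then 0 < det(sI − M) ≤ s^p, with equality det(sI − M) = s^p if and only if M is nilpotent. Equivalently, h := −log det(sI − M) + p·log s satisfies h ≥ 0, with h = 0 if and only if M is nilpotent. -/
open Matrix

open Polynomial

namespace Stmt15Aux

lemma eval_charpoly' {n : Type*} [Fintype n] [DecidableEq n] {K : Type*} [Field K]
    (A : Matrix n n K) (t : K) :
    (Matrix.charpoly A).eval t = (t • (1 : Matrix n n K) - A).det := by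
  unfold Matrix.charpoly
  rw [show (Polynomial.eval t : K[X] → K) = (Polynomial.evalRingHom t : K[X] → K) from rfl,
    RingHom.map_det]
  congr 1
  ext i j
  by_cases h : i = j <;>
    simp [h, Matrix.charmatrix_apply_eq, Matrix.charmatrix_apply_ne, Matrix.one_apply,
      Matrix.smul_apply, Matrix.sub_apply]

lemma exists_eigenvec {n : Type*} [Fintype n] [DecidableEq n] {K : Type*} [Field K]
    (A : Matrix n n K) {t : K} (h : (Matrix.charpoly A).IsRoot t) :
    ∃ v : n → K, v ≠ 0 ∧ A *ᵥ v = t • v := by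
  have hdet : (t • (1 : Matrix n n K) - A).det = 0 := by
    rw [← eval_charpoly']; exact h
  obtain ⟨v, hv0, hv⟩ := Matrix.exists_mulVec_eq_zero_iff.mpr hdet
  refine ⟨v, hv0, ?_⟩
  have h2 : (t • (1 : Matrix n n K) - A) *ᵥ v = t • v - A *ᵥ v := by
    rw [Matrix.sub_mulVec, Matrix.smul_mulVec, Matrix.one_mulVec]
  rw [hv] at h2
  exact (sub_eq_zero.mp h2.symm).symm

lemma exists_eigenvector_of_isRoot {V : Type*} [AddCommGroup V] [Module ℂ V]
    [FiniteDimensional ℂ V] (F : Module.End ℂ V) {t : ℂ}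
    (h : (LinearMap.charpoly F).IsRoot t) : ∃ x : V, x ≠ 0 ∧ F x = t • x := by
  let b := Module.Free.chooseBasis ℂ V
  set A := LinearMap.toMatrix b b F with hA
  have hc : Matrix.charpoly A = LinearMap.charpoly F := LinearMap.charpoly_toMatrix F b
  obtain ⟨v, hv0, hv⟩ := exists_eigenvec A (t := t) (by rwa [hc])
  refine ⟨b.equivFun.symm v, ?_, ?_⟩
  · exact (LinearEquiv.map_ne_zero_iff _).mpr hv0
  · have hrep : ⇑(b.repr (b.equivFun.symm v)) = v := by
      rw [← Module.Basis.equivFun_apply]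
      exact b.equivFun.apply_symm_apply v
    have h1 := LinearMap.toMatrix_mulVec_repr b b F (b.equivFun.symm v)
    rw [hrep, hv] at h1
    apply b.repr.injective
    apply DFunLike.coe_injective
    calc ⇑(b.repr (F (b.equivFun.symm v))) = t • v := h1.symm
    _ = t • ⇑(b.repr (b.equivFun.symm v)) := by rw [hrep]
    _ = ⇑(t • b.repr (b.equivFun.symm v)) := (Finsupp.coe_smul _ _).symm
    _ = ⇑(b.repr (t • b.equivFun.symm v)) := by rw [_root_.map_smul]

lemma nilpotent_shift_root {V : Type*} [AddCommGroup V] [Module ℂ V]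
    [FiniteDimensional ℂ V] (F : Module.End ℂ V) (μ : ℂ)
    (hN : IsNilpotent (F - algebraMap ℂ (Module.End ℂ V) μ)) {t : ℂ}
    (ht : (LinearMap.charpoly F).IsRoot t) : t = μ := by
  obtain ⟨x, hx0, hx⟩ := exists_eigenvector_of_isRoot F ht
  obtain ⟨m, hm⟩ := hN
  have h1 : (F - algebraMap ℂ (Module.End ℂ V) μ) x = (t - μ) • x := by
    rw [LinearMap.sub_apply, Module.algebraMap_end_apply, hx, sub_smul]
  have key : ∀ j : ℕ, ((F - algebraMap ℂ (Module.End ℂ V) μ) ^ j) x = (t - μ) ^ j • x := by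
    intro j
    induction j with
    | zero => simp
    | succ j ih =>
      rw [pow_succ, Module.End.mul_apply, h1, _root_.map_smul, ih, smul_smul, ← pow_succ']
  have h2 := key m
  rw [hm] at h2
  simp only [LinearMap.zero_apply] at h2
  have h3 : (t - μ) ^ m = 0 := by
    rcases smul_eq_zero.mp h2.symm with h | h
    · exact h
    · exact absurd h hx0
  have h4 := (pow_eq_zero_iff'.mp h3).1
  exact sub_eq_zero.mp h4

lemma trace_pow_shift {V : Type*} [AddCommGroup V] [Module ℂ V]
    [FiniteDimensional ℂ V] (F : Module.End ℂ V) (μ : ℂ)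
    (hN : IsNilpotent (F - algebraMap ℂ (Module.End ℂ V) μ)) (k : ℕ) :
    LinearMap.trace ℂ V (F ^ k) = μ ^ k * (Module.finrank ℂ V : ℂ) := by
  set N := F - algebraMap ℂ (Module.End ℂ V) μ with hNdef
  have hF : F = algebraMap ℂ (Module.End ℂ V) μ + N := (add_sub_cancel _ _).symm
  have hcomm : Commute (algebraMap ℂ (Module.End ℂ V) μ) N :=
    Algebra.commute_algebraMap_left μ N
  rw [hF, hcomm.add_pow, map_sum, Finset.sum_range_succ]
  have h0 : ∀ m ∈ Finset.range k,
      LinearMap.trace ℂ V ((algebraMap ℂ (Module.End ℂ V) μ) ^ m * N ^ (k - m) *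
        (k.choose m : Module.End ℂ V)) = 0 := by
    intro m hm
    have hm' : m < k := Finset.mem_range.mp hm
    have h1 : (algebraMap ℂ (Module.End ℂ V) μ) ^ m * N ^ (k - m) *
        (k.choose m : Module.End ℂ V) = (μ ^ m * (k.choose m : ℂ)) • N ^ (k - m) := by
      rw [← map_pow, ← map_natCast (algebraMap ℂ (Module.End ℂ V)) (k.choose m),
        mul_assoc, ← Algebra.commutes ((k.choose m : ℂ)) (N ^ (k - m)), ← mul_assoc,
        ← _root_.map_mul (algebraMap ℂ (Module.End ℂ V)), ← Algebra.smul_def]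
    rw [h1, (LinearMap.trace ℂ V).map_smul]
    have h2 : IsNilpotent (N ^ (k - m)) := by
      obtain ⟨n, hn⟩ := hN
      exact ⟨n, by rw [← pow_mul, mul_comm, pow_mul, hn, zero_pow (by omega)]⟩
    rw [(LinearMap.isNilpotent_trace_of_isNilpotent h2).eq_zero, smul_zero]
  rw [Finset.sum_eq_zero h0, zero_add, Nat.sub_self, pow_zero, mul_one, Nat.choose_self,
    Nat.cast_one, mul_one, ← map_pow, Algebra.algebraMap_eq_smul_one,
    (LinearMap.trace ℂ V).map_smul, LinearMap.trace_one, smul_eq_mul]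

-- helpers for conj/prodMap powers
lemma conj_pow' {V W : Type*} [AddCommGroup V] [Module ℂ V] [AddCommGroup W] [Module ℂ W]
    (e : V ≃ₗ[ℂ] W) (f : Module.End ℂ V) (k : ℕ) : e.conj (f ^ k) = (e.conj f) ^ k := by
  induction k with
  | zero =>
    rw [pow_zero, pow_zero, show (1 : Module.End ℂ V) = LinearMap.id from rfl,
      LinearEquiv.conj_id]
    rfl
  | succ k ih =>
    rw [pow_succ, pow_succ, Module.End.mul_eq_comp, Module.End.mul_eq_comp,
      LinearEquiv.conj_comp, ih]

lemma prodMap_pow' {V W : Type*} [AddCommGroup V] [Module ℂ V] [AddCommGroup W] [Module ℂ W]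
    (f : Module.End ℂ V) (g : Module.End ℂ W) (k : ℕ) :
    (f.prodMap g) ^ k = (f ^ k).prodMap (g ^ k) := by
  induction k with
  | zero =>
    apply LinearMap.ext; rintro ⟨x, y⟩
    simp
  | succ k ih =>
    apply LinearMap.ext; rintro ⟨x, y⟩
    rw [pow_succ, Module.End.mul_apply, ih]
    simp [pow_succ]

lemma trace_pow_eq_sum_pow_roots :
    ∀ (n : ℕ) (V : Type) (_ : AddCommGroup V) (_ : Module ℂ V) (_ : FiniteDimensional ℂ V),
      Module.finrank ℂ V = n → ∀ (f : Module.End ℂ V) (k : ℕ), k ≠ 0 →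
      LinearMap.trace ℂ V (f ^ k) = ((LinearMap.charpoly f).roots.map (· ^ k)).sum := by
  intro n
  induction n using Nat.strong_induction_on with
  | _ n ih =>
  intro V _ _ _ hV f k hk
  rcases Nat.eq_zero_or_pos n with hn | hn
  · subst hn
    haveI : Subsingleton V := Module.finrank_zero_iff.mp hV
    have h1 : f ^ k = 0 := Subsingleton.elim _ _
    have h2 : LinearMap.charpoly f = 1 :=
      ((LinearMap.charpoly_monic f).natDegree_eq_zero).mp
        (by rw [LinearMap.charpoly_natDegree, hV])
    simp [h1, h2]
  · haveI : Nontrivial V := Module.nontrivial_of_finrank_pos (hV ▸ hn)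
    obtain ⟨μ, hμ⟩ := Module.End.exists_eigenvalue f
    set φ := f - algebraMap ℂ (Module.End ℂ V) μ with hφdef
    obtain ⟨n₀, hn₀⟩ := Filter.eventually_atTop.mp (LinearMap.eventually_iSup_ker_pow_eq φ)
    have hV₀ker : (⨆ m, LinearMap.ker (φ ^ m)) = LinearMap.ker (φ ^ n₀) := hn₀ n₀ le_rfl
    set V₀ := ⨆ m, LinearMap.ker (φ ^ m) with hV₀def
    set W := ⨅ m, LinearMap.range (φ ^ m) with hWdef
    have hVW : IsCompl V₀ W := LinearMap.isCompl_iSup_ker_pow_iInf_range_pow φ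
    have hcommfφ : Commute f φ :=
      (Commute.refl f).sub_right (Algebra.commute_algebraMap_right μ f)
    have hfV₀ : ∀ x ∈ V₀, f x ∈ V₀ := by
      intro x hx
      rw [hV₀ker, LinearMap.mem_ker] at hx ⊢
      calc (φ ^ n₀) (f x) = (φ ^ n₀ * f) x := rfl
      _ = (f * φ ^ n₀) x := by rw [((hcommfφ.pow_right n₀).symm).eq]
      _ = f ((φ ^ n₀) x) := rfl
      _ = 0 := by rw [hx, map_zero]
    have hφV₀ : ∀ x ∈ V₀, φ x ∈ V₀ := by
      intro x hx
      rw [hV₀ker, LinearMap.mem_ker] at hx ⊢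
      calc (φ ^ n₀) (φ x) = φ ((φ ^ n₀) x) := by
            rw [← Module.End.mul_apply, ← Module.End.mul_apply, ← pow_succ, ← pow_succ']
      _ = 0 := by rw [hx, map_zero]
    have hfW : ∀ x ∈ W, f x ∈ W := by
      intro x hx
      rw [hWdef, Submodule.mem_iInf] at hx ⊢
      intro m
      obtain ⟨y, hy⟩ := hx m
      exact ⟨f y, by rw [← hy, ← Module.End.mul_apply, ((hcommfφ.pow_right m).symm).eq,
        Module.End.mul_apply]⟩
    set F := f.restrict hfV₀ with hFdef
    set G := f.restrict hfW with hGdef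
    set e := Submodule.prodEquivOfIsCompl V₀ W hVW with hedef
    have hψ : e.symm.conj f = F.prodMap G := by
      apply LinearMap.ext; rintro ⟨x, y⟩
      rw [LinearEquiv.conj_apply]
      simp only [LinearMap.coe_comp, Function.comp_apply, LinearEquiv.coe_coe,
        LinearEquiv.symm_symm]
      rw [LinearEquiv.symm_apply_eq]
      have h1 : e (x, y) = (x : V) + (y : V) := Submodule.coe_prodEquivOfIsCompl' V₀ W hVW (x, y)
      have h2 : e (F.prodMap G (x, y)) = (F x : V) + (G y : V) :=
        Submodule.coe_prodEquivOfIsCompl' V₀ W hVW _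
      rw [h1, h2, map_add]
      congr 1 <;> rw [LinearMap.restrict_coe_apply]
    -- nilpotency of F - μ
    set N := φ.restrict hφV₀ with hNdef2
    have hFN : F - algebraMap ℂ (Module.End ℂ ↥V₀) μ = N := by
      apply LinearMap.ext; intro x
      apply Subtype.ext
      rw [LinearMap.sub_apply, Module.algebraMap_end_apply]
      push_cast [AddSubgroupClass.coe_sub, SetLike.val_smul, LinearMap.restrict_coe_apply]
      rw [LinearMap.restrict_coe_apply, LinearMap.restrict_coe_apply, hφdef,
        LinearMap.sub_apply, Module.algebraMap_end_apply]
    have hNpow : N ^ n₀ = 0 := by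
      apply LinearMap.ext; intro x
      apply Subtype.ext
      rw [Module.End.pow_restrict n₀, LinearMap.restrict_coe_apply, LinearMap.zero_apply]
      have hx : (↑x : V) ∈ LinearMap.ker (φ ^ n₀) := hV₀ker ▸ x.2
      simpa using hx
    have hFnil : IsNilpotent (F - algebraMap ℂ (Module.End ℂ ↥V₀) μ) :=
      ⟨n₀, by rw [hFN, hNpow]⟩
    have htrF : LinearMap.trace ℂ ↥V₀ (F ^ k) = μ ^ k * (Module.finrank ℂ ↥V₀ : ℂ) :=
      trace_pow_shift F μ hFnil k
    have hrootsF : (LinearMap.charpoly F).roots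
        = Multiset.replicate (Module.finrank ℂ ↥V₀) μ := by
      rw [Multiset.eq_replicate]
      refine ⟨?_, fun b hb => nilpotent_shift_root F μ hFnil (Polynomial.isRoot_of_mem_roots hb)⟩
      rw [Polynomial.splits_iff_card_roots.mp (IsAlgClosed.splits _),
        LinearMap.charpoly_natDegree]
    have hdsum : Module.finrank ℂ ↥V₀ + Module.finrank ℂ ↥W = n := by
      rw [← hV]; exact Submodule.finrank_add_eq_of_isCompl hVW
    have hd₀pos : 0 < Module.finrank ℂ ↥V₀ := by
      obtain ⟨x, hx⟩ := hμ.exists_hasEigenvector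
      have hxmem : x ∈ V₀ := by
        have hker : x ∈ LinearMap.ker (φ ^ 1) := by
          rw [pow_one, LinearMap.mem_ker, hφdef, LinearMap.sub_apply,
            Module.algebraMap_end_apply, hx.apply_eq_smul, sub_self]
        exact Submodule.mem_iSup_of_mem 1 hker
      haveI : Nontrivial ↥V₀ :=
        ⟨⟨⟨x, hxmem⟩, 0, fun h => hx.right (by simpa using congrArg Subtype.val h)⟩⟩
      exact Module.finrank_pos
    have hIH := ih (Module.finrank ℂ ↥W) (by omega) ↥W inferInstance inferInstance
      inferInstance rfl G k hk
    have htr : LinearMap.trace ℂ V (f ^ k)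
        = LinearMap.trace ℂ ↥V₀ (F ^ k) + LinearMap.trace ℂ ↥W (G ^ k) := by
      rw [← LinearMap.trace_conj' (f ^ k) e.symm, conj_pow', hψ, prodMap_pow',
        LinearMap.trace_prodMap']
    have hcp : LinearMap.charpoly f = LinearMap.charpoly F * LinearMap.charpoly G := by
      rw [← LinearEquiv.charpoly_conj e.symm f, hψ, LinearMap.charpoly_prodMap]
    rw [htr, hcp, Polynomial.roots_mul (mul_ne_zero (LinearMap.charpoly_monic F).ne_zero
      (LinearMap.charpoly_monic G).ne_zero), Multiset.map_add, Multiset.sum_add, htrF, hIH,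
      hrootsF, Multiset.map_replicate, Multiset.sum_replicate, nsmul_eq_mul]
    ring

lemma trace_pow_eq_sum_pow_roots_mat {p : ℕ} (A : Matrix (Fin p) (Fin p) ℂ) {k : ℕ}
    (hk : k ≠ 0) : (A ^ k).trace = ((Matrix.charpoly A).roots.map (· ^ k)).sum := by
  have hchar : LinearMap.charpoly (Matrix.toLinAlgEquiv' A) = Matrix.charpoly A := by
    rw [← LinearMap.charpoly_toMatrix (Matrix.toLinAlgEquiv' A) (Pi.basisFun ℂ (Fin p)),
      LinearMap.toMatrix_eq_toMatrix']
    congr 1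
    exact LinearMap.toMatrix'_toLin' A
  have htr : LinearMap.trace ℂ (Fin p → ℂ) ((Matrix.toLinAlgEquiv' A) ^ k) = (A ^ k).trace := by
    rw [← map_pow, LinearMap.trace_eq_matrix_trace ℂ (Pi.basisFun ℂ (Fin p)),
      LinearMap.toMatrix_eq_toMatrix']
    congr 1
    exact LinearMap.toMatrix'_toLin' (A ^ k)
  rw [← htr, ← hchar]
  exact trace_pow_eq_sum_pow_roots (Module.finrank ℂ (Fin p → ℂ)) (Fin p → ℂ)
    inferInstance inferInstance inferInstance rfl (Matrix.toLinAlgEquiv' A) k hk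

lemma multiset_hasSum (S : Multiset ℂ) (f : ℂ → ℕ → ℂ) (g : ℂ → ℂ)
    (h : ∀ a ∈ S, HasSum (f a) (g a)) :
    HasSum (fun n => (S.map (fun a => f a n)).sum) ((S.map g).sum) := by
  induction S using Multiset.induction with
  | empty => simpa using hasSum_zero
  | cons a S ihS =>
    simp only [Multiset.map_cons, Multiset.sum_cons]
    exact (h a (Multiset.mem_cons_self a S)).add
      (ihS fun b hb => h b (Multiset.mem_cons_of_mem hb))

lemma multiset_prod_exp (S : Multiset ℂ) (f : ℂ → ℂ) :
    (S.map (fun a => Complex.exp (f a))).prod = Complex.exp ((S.map f).sum) := by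
  induction S using Multiset.induction with
  | empty => simp
  | cons a S ihS => simp [ihS, Complex.exp_add]

lemma multiset_sum_neg (S : Multiset ℂ) (f : ℂ → ℂ) :
    (S.map (fun a => -f a)).sum = -(S.map f).sum := by
  induction S using Multiset.induction with
  | empty => simp
  | cons a S ihS => simp [ihS]; ring

lemma powersum_zero (S : Multiset ℂ)
    (h : ∀ n : ℕ, n ≠ 0 → (S.map (· ^ n)).sum = 0) : ∀ z ∈ S, z = 0 := by
  classical
  intro z hzS
  by_contra hz0
  set T : Finset ℂ := S.toFinset.filter (· ≠ 0) with hT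
  set m := T.card with hm
  set eqv := T.equivFin with heqv
  set v : Fin m → ℂ := fun i => (eqv.symm i : ℂ) with hv
  have hvinj : Function.Injective v := fun i j hij => by
    have := Subtype.coe_injective hij
    exact eqv.symm.injective this
  have hvne : ∀ i, v i ≠ 0 := fun i => (Finset.mem_filter.mp (eqv.symm i).2).2
  set c : Fin m → ℂ := fun i => (S.count (v i) : ℂ) with hc
  have key : ∀ j : Fin m, ∑ i, c i * v i ^ ((j : ℕ) + 1) = 0 := by
    intro j
    have h1 := h ((j : ℕ) + 1) (Nat.succ_ne_zero _)
    rw [Finset.sum_multiset_map_count] at h1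
    rw [← Finset.sum_filter_add_sum_filter_not S.toFinset (· ≠ 0)] at h1
    have h2 : ∑ x ∈ S.toFinset.filter (fun x => ¬ x ≠ 0),
        S.count x • x ^ ((j : ℕ) + 1) = 0 := by
      apply Finset.sum_eq_zero
      intro x hx
      have : x = 0 := not_not.mp (Finset.mem_filter.mp hx).2
      simp [this]
    rw [h2, add_zero] at h1
    have h3 : ∑ x ∈ T, (S.count x : ℂ) * x ^ ((j : ℕ) + 1) = 0 := by
      rw [← h1]
      apply Finset.sum_congr rfl
      intro x _
      rw [nsmul_eq_mul]
    rw [← h3, ← Finset.sum_coe_sort T (fun x => (S.count x : ℂ) * x ^ ((j : ℕ) + 1))]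
    exact Fintype.sum_equiv eqv.symm _ _ (fun i => rfl)
  -- Vandermonde
  set B : Matrix (Fin m) (Fin m) ℂ := Matrix.of (fun i j => v i ^ ((j : ℕ) + 1)) with hB
  have hBdet : B.det ≠ 0 := by
    have hBeq : B = Matrix.diagonal v * Matrix.vandermonde v := by
      ext i j
      simp only [hB, Matrix.of_apply, Matrix.mul_apply, Matrix.diagonal_apply,
        Matrix.vandermonde_apply, ite_mul, zero_mul]
      rw [Finset.sum_ite_eq Finset.univ i (fun l => v i * v l ^ (j : ℕ)),
        if_pos (Finset.mem_univ i), ← pow_succ']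
    rw [hBeq, Matrix.det_mul, Matrix.det_diagonal, Matrix.det_vandermonde]
    apply mul_ne_zero
    · exact Finset.prod_ne_zero_iff.mpr fun i _ => hvne i
    · apply Finset.prod_ne_zero_iff.mpr
      intro i _
      apply Finset.prod_ne_zero_iff.mpr
      intro j hj
      have hij : i ≠ j := ne_of_lt (Finset.mem_Ioi.mp hj)
      exact sub_ne_zero.mpr fun hIJ => hij ((hvinj hIJ).symm)
  have hcB : Matrix.vecMul c B = 0 := by
    funext j
    simp only [Matrix.vecMul, dotProduct, hB, Matrix.of_apply, Pi.zero_apply]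
    exact key j
  have hc0 : c = 0 := by
    have hU : IsUnit B.det := isUnit_iff_ne_zero.mpr hBdet
    have := congrArg (fun w => Matrix.vecMul w B⁻¹) hcB
    simpa [Matrix.vecMul_vecMul, Matrix.mul_nonsing_inv B hU] using this
  have hzT : z ∈ T := Finset.mem_filter.mpr ⟨Multiset.mem_toFinset.mpr hzS, hz0⟩
  have h5 : c (eqv ⟨z, hzT⟩) = 0 := by rw [hc0]; rfl
  have hvz : v (eqv ⟨z, hzT⟩) = z := by rw [hv]; simp
  have h6 : (S.count z : ℂ) = 0 := by rw [← hvz]; exact h5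
  have h7 : S.count z = 0 := by exact_mod_cast h6
  exact absurd (Multiset.count_eq_zero.mp h7) (not_not.mpr hzS)

lemma pow_entry_nonneg {p : ℕ} (M : Matrix (Fin p) (Fin p) ℝ) (hM : ∀ j k, 0 ≤ M j k)
    (n : ℕ) : ∀ j k, 0 ≤ (M ^ n) j k := by
  induction n with
  | zero =>
    intro j k
    rw [pow_zero]
    by_cases h : j = k <;> simp [Matrix.one_apply, h]
  | succ n ihn =>
    intro j k
    rw [pow_succ, Matrix.mul_apply]
    exact Finset.sum_nonneg fun l _ => mul_nonneg (ihn j l) (hM l k)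

lemma map_matrix_pow {p : ℕ} (M : Matrix (Fin p) (Fin p) ℝ) (n : ℕ) :
    (M ^ n).map (algebraMap ℝ ℂ) = (M.map (algebraMap ℝ ℂ)) ^ n := by
  have h := map_pow ((algebraMap ℝ ℂ).mapMatrix) M n
  simpa [RingHom.mapMatrix_apply] using h

lemma trace_map_matrix {p : ℕ} (N : Matrix (Fin p) (Fin p) ℝ) :
    (N.map (algebraMap ℝ ℂ)).trace = ((N.trace : ℝ) : ℂ) := by
  simp [Matrix.trace, Matrix.diag, Matrix.map_apply]

end Stmt15Aux

open Stmt15Aux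

/-- the DAGMA log-det characterization of acyclicity:
0 < det(sI − M) ≤ s^p with equality iff M is nilpotent; equivalently
h = −log det(sI − M) + p log s ≥ 0 with h = 0 iff M is nilpotent. -/
theorem stmt15 {p : ℕ} (M : Matrix (Fin p) (Fin p) ℝ)
    (hM : ∀ j k, 0 ≤ M j k) (s : ℝ) (hs : specRad M < ENNReal.ofReal s) :
    (0 < (s • (1 : Matrix (Fin p) (Fin p) ℝ) - M).det ∧
     (s • (1 : Matrix (Fin p) (Fin p) ℝ) - M).det ≤ s ^ p ∧
     ((s • (1 : Matrix (Fin p) (Fin p) ℝ) - M).det = s ^ p ↔ IsNilpotent M)) ∧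
    (0 ≤ -Real.log ((s • (1 : Matrix (Fin p) (Fin p) ℝ) - M).det) + p * Real.log s ∧
     (-Real.log ((s • (1 : Matrix (Fin p) (Fin p) ℝ) - M).det) + p * Real.log s = 0 ↔
       IsNilpotent M)) := by
  classical
  set A : Matrix (Fin p) (Fin p) ℂ := M.map (algebraMap ℝ ℂ) with hA
  have hs0 : 0 < s := ENNReal.ofReal_pos.mp (lt_of_le_of_lt zero_le hs)
  have hsC : ((s : ℝ) : ℂ) ≠ 0 := by
    simpa using ne_of_gt hs0
  set R := (Matrix.charpoly A).roots with hR
  have hcard : Multiset.card R = p := by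
    rw [hR, Polynomial.splits_iff_card_roots.mp (IsAlgClosed.splits _),
      Matrix.charpoly_natDegree_eq_dim, Fintype.card_fin]
  have hroot_norm : ∀ z ∈ R, ‖z‖ < s := by
    intro z hz
    have hzdet : (z • (1 : Matrix (Fin p) (Fin p) ℂ) - A).det = 0 := by
      rw [← eval_charpoly']
      exact Polynomial.isRoot_of_mem_roots hz
    have hspec : z ∈ spectrum ℂ A := by
      rw [spectrum.mem_iff, Algebra.algebraMap_eq_smul_one, Matrix.isUnit_iff_isUnit_det, hzdet]
      simp
    have h2 : (‖z‖₊ : ENNReal) ≤ spectralRadius ℂ A :=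
      le_iSup₂ (f := fun k (_ : k ∈ spectrum ℂ A) => (‖k‖₊ : ENNReal)) z hspec
    have h3 : (‖z‖₊ : ENNReal) < ENNReal.ofReal s := lt_of_le_of_lt h2 hs
    have h4 : ‖z‖₊ < s.toNNReal := by
      simpa [ENNReal.ofReal] using h3
    have h5 : (‖z‖₊ : ℝ) < (s.toNNReal : ℝ) := NNReal.coe_lt_coe.mpr h4
    rwa [coe_nnnorm, Real.coe_toNNReal s hs0.le] at h5
  have hdivnorm : ∀ z ∈ R, ‖z / (s : ℂ)‖ < 1 := by
    intro z hz
    rw [norm_div, Complex.norm_real, Real.norm_eq_abs, abs_of_pos hs0, div_lt_one hs0]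
    exact hroot_norm z hz
  have hnz : ∀ z ∈ R, (1 : ℂ) - z / (s : ℂ) ≠ 0 := by
    intro z hz h0
    have h1 : z / (s : ℂ) = 1 := by linear_combination -h0
    have h2 := hdivnorm z hz
    rw [h1] at h2
    simp at h2
  set q : ℕ → ℝ := fun n => (M ^ n).trace / (s ^ n * n) with hq
  have hqnonneg : ∀ n, 0 ≤ q n := by
    intro n
    apply div_nonneg
    · exact Finset.sum_nonneg fun i _ => pow_entry_nonneg M hM n i i
    · positivity
  have htraceA : ∀ n : ℕ, n ≠ 0 → (R.map (· ^ n)).sum = ((M ^ n).trace : ℂ) := by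
    intro n hn
    rw [hR, ← trace_pow_eq_sum_pow_roots_mat A hn, ← map_matrix_pow, trace_map_matrix]
  have hterm : ∀ z ∈ R, HasSum (fun n : ℕ => (z / (s : ℂ)) ^ n / n)
      (-Complex.log (1 - z / (s : ℂ))) := fun z hz =>
    Complex.hasSum_taylorSeries_neg_log (hdivnorm z hz)
  have hsum0 := multiset_hasSum R _ _ hterm
  set C : ℂ := (R.map (fun z => -Complex.log (1 - z / (s : ℂ)))).sum with hC
  have hterm_eq : ∀ n : ℕ, (R.map (fun z => (z / (s : ℂ)) ^ n / n)).sum = ((q n : ℝ) : ℂ) := by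
    intro n
    rcases eq_or_ne n 0 with rfl | hn
    · simp [hq]
    · have hnC : ((n : ℕ) : ℂ) ≠ 0 := Nat.cast_ne_zero.mpr hn
      have h1 : ∀ z, (z / (s : ℂ)) ^ n / n = z ^ n * (1 / ((s : ℂ) ^ n * n)) := by
        intro z
        field_simp
        rw [div_pow, div_mul_cancel₀ _ (pow_ne_zero _ hsC)]
      rw [Multiset.map_congr rfl (fun z _ => h1 z), Multiset.sum_map_mul_right, htraceA n hn]
      rw [hq]
      push_cast
      ring
  have hsum : HasSum (fun n => ((q n : ℝ) : ℂ)) C := by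
    simp only [hterm_eq] at hsum0
    exact hsum0
  have hre : HasSum q C.re := by
    have := hsum.mapL Complex.reCLM
    simpa using this
  have him : C.im = 0 := by
    have h1 : HasSum (fun _ : ℕ => (0 : ℝ)) C.im := by
      have := hsum.mapL Complex.imCLM
      simpa using this
    exact h1.unique hasSum_zero
  set L := C.re with hL
  have hCL : C = ((L : ℝ) : ℂ) := Complex.ext rfl (by simp [him])
  have hLnonneg : 0 ≤ L := hasSum_le (fun n => hqnonneg n) hasSum_zero hre
  -- determinant identity
  have hdetC : (((s • (1 : Matrix (Fin p) (Fin p) ℝ) - M).det : ℝ) : ℂ)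
      = (R.map (fun z => (s : ℂ) - z)).prod := by
    have h1 : ((s • (1 : Matrix (Fin p) (Fin p) ℝ) - M).map (algebraMap ℝ ℂ))
        = (s : ℂ) • (1 : Matrix (Fin p) (Fin p) ℂ) - A := by
      ext i j
      by_cases h : i = j <;>
        simp [hA, Matrix.map_apply, Matrix.sub_apply, Matrix.smul_apply, Matrix.one_apply, h]
    have h2 := RingHom.map_det (algebraMap ℝ ℂ) (s • (1 : Matrix (Fin p) (Fin p) ℝ) - M)
    rw [RingHom.mapMatrix_apply, h1] at h2
    have h3 : ((s : ℂ) • (1 : Matrix (Fin p) (Fin p) ℂ) - A).det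
        = (R.map (fun z => (s : ℂ) - z)).prod := by
      rw [← eval_charpoly',
        (IsAlgClosed.splits _).eq_prod_roots_of_monic (Matrix.charpoly_monic A),
          Polynomial.eval_multiset_prod, Multiset.map_map]
      congr 1
      apply Multiset.map_congr rfl
      intro z _
      simp
    rw [← h3, ← h2]
    norm_num
  have hfactor : (R.map (fun z => (s : ℂ) - z)).prod
      = ((s : ℂ)) ^ p * (R.map (fun z => 1 - z / (s : ℂ))).prod := by
    have h1 : ∀ z, (s : ℂ) - z = (s : ℂ) * (1 - z / (s : ℂ)) := by
      intro z; field_simp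
    rw [Multiset.map_congr rfl (fun z _ => h1 z), Multiset.prod_map_mul]
    congr 1
    rw [Multiset.map_const', Multiset.prod_replicate, hcard]
  have hexp : (R.map (fun z => 1 - z / (s : ℂ))).prod = Complex.exp (-C) := by
    have h1 : ∀ z ∈ R, (1 : ℂ) - z / (s : ℂ)
        = Complex.exp (Complex.log (1 - z / (s : ℂ))) := fun z hz =>
      (Complex.exp_log (hnz z hz)).symm
    rw [Multiset.map_congr rfl h1, multiset_prod_exp, hC, multiset_sum_neg, neg_neg]
  have hDeq : (((s • (1 : Matrix (Fin p) (Fin p) ℝ) - M).det : ℝ) : ℂ)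
      = ((s ^ p * Real.exp (-L) : ℝ) : ℂ) := by
    rw [hdetC, hfactor, hexp, hCL, ← Complex.ofReal_neg, ← Complex.ofReal_exp]
    push_cast
    ring
  have hD : (s • (1 : Matrix (Fin p) (Fin p) ℝ) - M).det = s ^ p * Real.exp (-L) := by
    exact_mod_cast hDeq
  -- nilpotency characterization
  have hnil : IsNilpotent M ↔ (∀ n : ℕ, n ≠ 0 → (M ^ n).trace = 0) := by
    constructor
    · rintro ⟨m, hm⟩ n hn
      have hroots0 : ∀ z ∈ R, z = 0 := by
        intro z hz
        obtain ⟨v, hv0, hv⟩ := exists_eigenvec A (Polynomial.isRoot_of_mem_roots hz)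
        have hAm : A ^ m = 0 := by
          rw [← map_matrix_pow, hm]
          ext i j
          simp
        have hiter : ∀ j : ℕ, (A ^ j) *ᵥ v = z ^ j • v := by
          intro j
          induction j with
          | zero => simp
          | succ j ihj =>
            rw [pow_succ', ← Matrix.mulVec_mulVec, ihj, Matrix.mulVec_smul, hv,
              smul_smul, ← pow_succ]
        have h5 := hiter m
        rw [hAm] at h5
        simp only [Matrix.zero_mulVec] at h5
        have h6 : z ^ m = 0 := by
          rcases smul_eq_zero.mp h5.symm with h | h
          · exact h
          · exact absurd h hv0
        exact pow_eq_zero_iff'.mp h6 |>.1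
      have h7 := htraceA n hn
      have h8 : (R.map (· ^ n)).sum = 0 := by
        rw [show (R.map (· ^ n)) = R.map (fun _ => (0 : ℂ)) from
          Multiset.map_congr rfl (fun z hz => by rw [hroots0 z hz, zero_pow hn])]
        simp
      rw [h8] at h7
      exact_mod_cast h7.symm
    · intro htr
      have h8 : ∀ n : ℕ, n ≠ 0 → (R.map (· ^ n)).sum = 0 := by
        intro n hn
        rw [htraceA n hn, htr n hn]
        simp
      have hroots0 := powersum_zero R h8
      have hcharpoly : Matrix.charpoly A = Polynomial.X ^ p := by
        rw [(IsAlgClosed.splits _).eq_prod_roots_of_monic (Matrix.charpoly_monic A), ← hR]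
        rw [show (R.map fun a => Polynomial.X - Polynomial.C a)
            = R.map (fun _ => (Polynomial.X : Polynomial ℂ)) from
          Multiset.map_congr rfl (fun z hz => by rw [hroots0 z hz, map_zero, sub_zero])]
        rw [Multiset.map_const', Multiset.prod_replicate, hcard]
      have hAp : A ^ p = 0 := by
        have h9 := Matrix.aeval_self_charpoly A
        rw [hcharpoly, map_pow, Polynomial.aeval_X] at h9
        exact h9
      refine ⟨p, ?_⟩
      have h10 : (M ^ p).map (algebraMap ℝ ℂ) = 0 := by rw [map_matrix_pow, hAp]
      ext i j
      have h11 := congrFun (congrFun h10 i) j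
      simp only [Matrix.map_apply, Matrix.zero_apply] at h11 ⊢
      have h12 : (((M ^ p) i j : ℝ) : ℂ) = 0 := h11
      exact_mod_cast h12
  -- q / L reformulations
  have hiff2 : L = 0 ↔ ∀ n, q n = 0 := by
    constructor
    · intro h n
      have h1 : q n ≤ L := le_hasSum hre n (fun j _ => hqnonneg j)
      exact le_antisymm (h ▸ h1) (hqnonneg n)
    · intro h
      have h1 : HasSum (fun _ : ℕ => (0 : ℝ)) L := by
        rw [show (fun _ : ℕ => (0 : ℝ)) = q from funext fun n => (h n).symm]
        exact hre
      exact (h1.unique hasSum_zero).symm ▸ rfl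
  have hiff3 : (∀ n, q n = 0) ↔ ∀ n : ℕ, n ≠ 0 → (M ^ n).trace = 0 := by
    constructor
    · intro h n hn
      have h1 := h n
      rw [hq] at h1
      have h2 : s ^ n * (n : ℝ) ≠ 0 := by positivity
      rcases div_eq_zero_iff.mp h1 with h3 | h3
      · exact h3
      · exact absurd h3 h2
    · intro h n
      rcases eq_or_ne n 0 with rfl | hn
      · simp [hq]
      · rw [hq]
        simp only []
        rw [h n hn, zero_div]
  have hDiff : (s • (1 : Matrix (Fin p) (Fin p) ℝ) - M).det = s ^ p ↔ IsNilpotent M := by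
    rw [hD, hnil, ← hiff3, ← hiff2]
    constructor
    · intro h
      have h1 : s ^ p * Real.exp (-L) = s ^ p * 1 := by rw [h, mul_one]
      have h2 : Real.exp (-L) = 1 := mul_left_cancel₀ (by positivity) h1
      have h3 := (Real.exp_eq_one_iff _).mp h2
      linarith
    · intro h
      rw [h, neg_zero, Real.exp_zero, mul_one]
  have hDpos : 0 < (s • (1 : Matrix (Fin p) (Fin p) ℝ) - M).det := by
    rw [hD]; positivity
  have hDle : (s • (1 : Matrix (Fin p) (Fin p) ℝ) - M).det ≤ s ^ p := by
    rw [hD]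
    calc s ^ p * Real.exp (-L) ≤ s ^ p * 1 := by
          apply mul_le_mul_of_nonneg_left _ (le_of_lt (pow_pos hs0 p))
          exact Real.exp_le_one_iff.mpr (neg_nonpos.mpr hLnonneg)
    _ = s ^ p := mul_one _
  refine ⟨⟨hDpos, hDle, hDiff⟩, ?_, ?_⟩
  · have h1 : Real.log ((s • (1 : Matrix (Fin p) (Fin p) ℝ) - M).det) ≤ Real.log (s ^ p) :=
      Real.log_le_log hDpos hDle
    rw [Real.log_pow] at h1
    linarith
  · constructor
    · intro h
      have h1 : Real.log ((s • (1 : Matrix (Fin p) (Fin p) ℝ) - M).det)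
          = Real.log (s ^ p) := by rw [Real.log_pow]; linarith
      have h2 : (s • (1 : Matrix (Fin p) (Fin p) ℝ) - M).det = s ^ p := by
        rw [← Real.exp_log hDpos, h1, Real.exp_log (pow_pos hs0 p)]
      exact hDiff.mp h2
    · intro h
      have h2 := hDiff.mpr h
      rw [h2, Real.log_pow]
      ring
end

section
/- Let p ≥ 1, W̃ ∈ ℝ^{p×p} with 0 ≤ w̃_{jk} ≤ 1 for all j, k, and let s ≥ 1 + max(‖W̃‖₁, ‖W̃‖_∞). Then for every W ∈ ℝ^{p×p} with 0 ≤ w_{jk} ≤ w̃_{jk} for all j, k: (i) every entry of (sI − W∘W)^{-1} has absolute value at most 1; and (ii) the matrix W − ((sI − W∘W)^{-1})^T ∘ W is entrywise nonnegative. -/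
open Matrix

/-- the entries of (sI − W∘W)⁻¹ are bounded by one in absolute
value, and W − ((sI − W∘W)⁻¹)ᵀ ∘ W is entrywise nonnegative. -/
theorem stmt16 {p : ℕ} (hp : 1 ≤ p) (Wt : Matrix (Fin p) (Fin p) ℝ)
    (hWt : ∀ j k, 0 ≤ Wt j k ∧ Wt j k ≤ 1) (s : ℝ)
    (hs : 1 + max (colSumNorm Wt) (rowSumNorm Wt) ≤ s) :
    ∀ W : Matrix (Fin p) (Fin p) ℝ, (∀ j k, 0 ≤ W j k ∧ W j k ≤ Wt j k) →
      (∀ j k, |((s • (1 : Matrix (Fin p) (Fin p) ℝ) - Matrix.hadamard W W)⁻¹) j k| ≤ 1) ∧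
      (∀ j k, 0 ≤ (W - Matrix.hadamard
        ((s • (1 : Matrix (Fin p) (Fin p) ℝ) - Matrix.hadamard W W)⁻¹)ᵀ W) j k) := by
  intro W hW
  have hne : Nonempty (Fin p) := ⟨⟨0, hp⟩⟩
  -- rowSumNorm Wt ≤ s - 1
  have hrowle : rowSumNorm Wt ≤ s - 1 := by
    have := le_max_right (colSumNorm Wt) (rowSumNorm Wt)
    linarith
  have hrow : ∀ j, ∑ k, W j k * W j k ≤ s - 1 := by
    intro j
    have h1 : ∑ k, W j k * W j k ≤ ∑ k, |Wt j k| := by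
      apply Finset.sum_le_sum
      intro k _
      have h0 := (hW j k).1
      have h1 := (hW j k).2
      have h2 := (hWt j k).1
      have h3 := (hWt j k).2
      rw [abs_of_nonneg h2]
      nlinarith
    have h2 : ∑ k, |Wt j k| ≤ rowSumNorm Wt := by
      rw [rowSumNorm]
      exact le_ciSup (f := fun j => ∑ k, |Wt j k|)
        (Set.Finite.bddAbove (Set.finite_range _)) j
    linarith
  have hWsq_nonneg : ∀ j k, 0 ≤ W j k * W j k := fun j k =>
    mul_self_nonneg _
  have hs1 : 1 ≤ s := by
    have h0 : (0:ℝ) ≤ ∑ k, W (Classical.arbitrary (Fin p)) k * W (Classical.arbitrary (Fin p)) k :=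
      Finset.sum_nonneg fun k _ => hWsq_nonneg _ k
    have := hrow (Classical.arbitrary (Fin p))
    linarith
  set A : Matrix (Fin p) (Fin p) ℝ :=
    s • (1 : Matrix (Fin p) (Fin p) ℝ) - Matrix.hadamard W W with hA
  have hAapp : ∀ j k, A j k = s * (if j = k then 1 else 0) - W j k * W j k := by
    intro j k
    simp [hA, Matrix.hadamard, Matrix.one_apply, Matrix.sub_apply, Matrix.smul_apply]
  -- strict diagonal dominance
  have hdet : A.det ≠ 0 := by
    apply det_ne_zero_of_sum_row_lt_diag
    intro j
    have hdiag : A j j = s - W j j * W j j := by simp [hAapp j j]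
    have hdiagpos : 0 < s - W j j * W j j := by
      have h1 := hrow j
      have h2 : W j j * W j j ≤ ∑ k, W j k * W j k :=
        Finset.single_le_sum (fun k _ => hWsq_nonneg j k) (Finset.mem_univ j)
      linarith
    have hoff : ∀ k ∈ Finset.univ.erase j, ‖A j k‖ = W j k * W j k := by
      intro k hk
      have hkj : k ≠ j := Finset.ne_of_mem_erase hk
      rw [hAapp j k, if_neg (Ne.symm hkj)]
      simp [Real.norm_eq_abs, abs_of_nonneg (hWsq_nonneg j k)]
    calc ∑ k ∈ Finset.univ.erase j, ‖A j k‖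
        = ∑ k ∈ Finset.univ.erase j, W j k * W j k := Finset.sum_congr rfl hoff
      _ = (∑ k, W j k * W j k) - W j j * W j j := by
          rw [Finset.sum_erase_eq_sub (Finset.mem_univ j)]
      _ < s - W j j * W j j := by have := hrow j; linarith
      _ = ‖A j j‖ := by
          rw [hdiag, Real.norm_eq_abs, abs_of_pos hdiagpos]
  have hmul : A * A⁻¹ = 1 := Matrix.mul_nonsing_inv A (isUnit_iff_ne_zero.mpr hdet)
  -- entrywise bound on A⁻¹
  have hbound : ∀ j k, |A⁻¹ j k| ≤ 1 := by
    intro j k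
    obtain ⟨j₀, _, hj₀⟩ := Finset.exists_max_image Finset.univ
      (fun i => |A⁻¹ i k|) ⟨j, Finset.mem_univ j⟩
    set c := |A⁻¹ j₀ k| with hc
    have hcj : ∀ i, |A⁻¹ i k| ≤ c := fun i => hj₀ i (Finset.mem_univ i)
    have hcnn : 0 ≤ c := abs_nonneg _
    suffices hc1 : c ≤ 1 by exact le_trans (hcj j) hc1
    -- row j₀, column k of A * A⁻¹ = 1
    have hent : ∑ l, A j₀ l * A⁻¹ l k = (if j₀ = k then 1 else 0) := by
      have := congrFun (congrFun hmul j₀) k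
      rw [Matrix.mul_apply] at this
      rw [this, Matrix.one_apply]
    have hsplit : s * A⁻¹ j₀ k - ∑ l, (W j₀ l * W j₀ l) * A⁻¹ l k
        = (if j₀ = k then 1 else 0) := by
      rw [← hent]
      have heach : ∀ l, A j₀ l * A⁻¹ l k
          = (s * if j₀ = l then 1 else 0) * A⁻¹ l k - (W j₀ l * W j₀ l) * A⁻¹ l k := by
        intro l; rw [hAapp]; ring
      simp_rw [heach, Finset.sum_sub_distrib]
      congr 1
      simp [ite_mul, mul_assoc]
    have key : s * c ≤ 1 + (s - 1) * c := by
      have h1 : |s * A⁻¹ j₀ k| ≤ |(if j₀ = k then (1:ℝ) else 0)|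
          + |∑ l, (W j₀ l * W j₀ l) * A⁻¹ l k| := by
        have : s * A⁻¹ j₀ k = (if j₀ = k then (1:ℝ) else 0)
            + ∑ l, (W j₀ l * W j₀ l) * A⁻¹ l k := by linarith [hsplit]
        rw [this]; exact abs_add_le _ _
      have h2 : |(if j₀ = k then (1:ℝ) else 0)| ≤ 1 := by
        split <;> simp
      have h3 : |∑ l, (W j₀ l * W j₀ l) * A⁻¹ l k| ≤ (s - 1) * c := by
        calc |∑ l, (W j₀ l * W j₀ l) * A⁻¹ l k|
            ≤ ∑ l, |(W j₀ l * W j₀ l) * A⁻¹ l k| := Finset.abs_sum_le_sum_abs _ _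
          _ ≤ ∑ l, (W j₀ l * W j₀ l) * c := by
              apply Finset.sum_le_sum
              intro l _
              rw [abs_mul, abs_of_nonneg (hWsq_nonneg j₀ l)]
              exact mul_le_mul_of_nonneg_left (hcj l) (hWsq_nonneg j₀ l)
          _ = (∑ l, W j₀ l * W j₀ l) * c := by rw [Finset.sum_mul]
          _ ≤ (s - 1) * c := mul_le_mul_of_nonneg_right (hrow j₀) hcnn
      have h4 : s * c = |s * A⁻¹ j₀ k| := by
        rw [abs_mul, abs_of_pos (lt_of_lt_of_le one_pos hs1)]
      linarith
    linarith
  refine ⟨hbound, ?_⟩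
  intro j k
  have h1 : (W - Matrix.hadamard (A⁻¹)ᵀ W) j k = (1 - A⁻¹ k j) * W j k := by
    simp [Matrix.hadamard, Matrix.sub_apply, Matrix.transpose_apply]
    ring
  rw [h1]
  apply mul_nonneg _ (hW j k).1
  have := hbound k j
  have := abs_le.mp this
  linarith [this.2]
end
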